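/- arXiv:2308.06232 — 4 statements merged into one kernel-verified Lean document; each statement's English description precedes it below -/
import Mathlib

section
/- Let G = (V,E) be a locally finite connected simple graph and let ν : V → [0,∞) be a weight with finite total mass ν(V) = Σ_{v∈V} ν(v) < ∞ (write ν(B) = Σ_{v∈B} ν(v)). Let A ⊆ V be a connected subset with #A ≥ 2 and finite diameter. Then there exists z ∈ A such that ν(B(z,r)) ≤ (8/diam A)·max(r,1)·ν(V) for every r > 0. -/
open scoped ENNReal NNReal

namespace Paper

variable {V : Type*}

/-- A combinatorial path in a simple graph `G`: a list of at least two vertices in which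
consecutive vertices are adjacent.  Paths are identified with their vertex sets. -/
def IsPathList (G : SimpleGraph V) (θ : List V) : Prop :=
  θ.Chain' G.Adj ∧ 2 ≤ θ.length

/-- The `ρ`-length of a path `θ` (identified with its vertex set): the sum of `ρ`
over the distinct vertices of `θ`. -/
noncomputable def pathLen [DecidableEq V] (ρ : V → ℝ≥0) (θ : List V) : ℝ≥0∞ :=
  ∑ v ∈ θ.toFinset, (ρ v : ℝ≥0∞)

/-- `ρ` is admissible for the path family `Θ`. -/
def AdmissibleFor [DecidableEq V] (Θ : Set (List V)) (ρ : V → ℝ≥0) : Prop :=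
  ∀ θ ∈ Θ, 1 ≤ pathLen ρ θ

/-- The combinatorial `p`-modulus of a path family. -/
noncomputable def pMod [DecidableEq V] (p : ℝ) (Θ : Set (List V)) : ℝ≥0∞ :=
  ⨅ (ρ : V → ℝ≥0) (_ : AdmissibleFor Θ ρ), ∑' v : V, (ρ v : ℝ≥0∞) ^ p

/-- Open ball in the graph metric. -/
def gBall (G : SimpleGraph V) (x : V) (r : ℝ) : Set V :=
  {y | (G.dist x y : ℝ) < r}

/-- Closed ball in the graph metric. -/
def gcBall (G : SimpleGraph V) (x : V) (r : ℝ) : Set V :=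
  {y | (G.dist x y : ℝ) ≤ r}

/-- Diameter (in `ℝ≥0∞`) of a set of vertices, with respect to the graph metric. -/
noncomputable def gDiam (G : SimpleGraph V) (A : Set V) : ℝ≥0∞ :=
  ⨆ x ∈ A, ⨆ y ∈ A, (G.dist x y : ℝ≥0∞)

/-- Distance (in `ℝ≥0∞`) between two sets of vertices. -/
noncomputable def gDist (G : SimpleGraph V) (A B : Set V) : ℝ≥0∞ :=
  ⨅ x ∈ A, ⨅ y ∈ B, (G.dist x y : ℝ≥0∞)

/-- `PathIn G A₀ A₁ A₂ θ` : `θ` is a path lying in `A₂`, starting in `A₀` and ending in `A₁`. -/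
def PathIn (G : SimpleGraph V) (A₀ A₁ A₂ : Set V) (θ : List V) : Prop :=
  IsPathList G θ ∧ (∀ v ∈ θ, v ∈ A₂) ∧
    ∀ h : θ ≠ [], θ.head h ∈ A₀ ∧ θ.getLast h ∈ A₁

/-- A subset of the vertex set is connected if the induced subgraph is connected. -/
def ConnSubset (G : SimpleGraph V) (A : Set V) : Prop :=
  (G.induce A).Connected

/-- Local finiteness of a graph. -/
def LocFin (G : SimpleGraph V) : Prop := ∀ v : V, (G.neighborSet v).Finite

/-- `deg(G) ≤ D` : a uniform bound on vertex degrees. -/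
def DegLE (G : SimpleGraph V) (D : ℕ) : Prop :=
  ∀ v : V, (G.neighborSet v).Finite ∧ (G.neighborSet v).ncard ≤ D

/-- The combinatorial ball Loewner condition `BCL_p(ζ)` with explicit constants
`A`, `cB(⬝)`, `LB(⬝)`. -/
def BCLwith [DecidableEq V] (G : SimpleGraph V) (p ζ A : ℝ) (cB LB : ℝ → ℝ) : Prop :=
  1 ≤ A ∧ (∀ κ : ℝ, 0 < κ → 0 < cB κ ∧ 0 < LB κ) ∧
    ∀ κ : ℝ, 0 < κ → ∀ R : ℝ, 1 ≤ R →
      ENNReal.ofReal (A * R) < gDiam G Set.univ →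
      ∀ x₁ x₂ : V,
        gDist G (gBall G x₁ R) (gBall G x₂ R) ≤ ENNReal.ofReal (κ * R) →
        ENNReal.ofReal (cB κ * R ^ ζ) ≤
          pMod p {θ | PathIn G (gBall G x₁ R) (gBall G x₂ R) Set.univ θ ∧
            gDiam G {v | v ∈ θ} ≤ ENNReal.ofReal (LB κ * R)}

/-- Discrete `p`-energy (`ℝ≥0∞`-valued) of `f` over the edges with both endpoints in `A`. -/
noncomputable def pEnergy (G : SimpleGraph V) (p : ℝ) (A : Set V) (f : V → ℝ) : ℝ≥0∞ :=
  (∑' e : {e : V × V // G.Adj e.1 e.2 ∧ e.1 ∈ A ∧ e.2 ∈ A},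
      ENNReal.ofReal (|f e.1.1 - f e.1.2| ^ p)) / 2

/-- Average of `f` over the ball `B(x,R)` (with respect to the counting measure). -/
noncomputable def ballAvg (G : SimpleGraph V) (x : V) (R : ℝ) (f : V → ℝ) : ℝ :=
  (∑ᶠ y ∈ gBall G x R, f y) / ((gBall G x R).ncard : ℝ)

/-- The `(p,p)`-Poincaré inequality `PI_p(β)` with constants `CPI`, `API`. -/
def PIineq (G : SimpleGraph V) (p β CPI API : ℝ) : Prop :=
  ∀ (x : V) (R : ℝ), 1 ≤ R → ∀ f : V → ℝ,
    (∑' y : gBall G x R, ENNReal.ofReal (|f y - ballAvg G x R f| ^ p)) ≤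
      ENNReal.ofReal (CPI * R ^ β) * pEnergy G p (gBall G x (API * R)) f

/-- Truncated maximal function of the gradient: `M_R^p[f](x)`. -/
noncomputable def maxEnergy (G : SimpleGraph V) (p : ℝ) (f : V → ℝ) (R : ℝ) (x : V) : ℝ≥0∞ :=
  ⨆ (r : ℝ) (_ : 0 < r) (_ : r < R),
    pEnergy G p (gBall G x r) f / ((gBall G x r).ncard : ℝ≥0∞)

/-- The two-point estimate `TP_p(β)` with constant `CTP`. -/
def TPineq (G : SimpleGraph V) (p β CTP : ℝ) : Prop :=
  ∀ (z : V) (R : ℝ), 1 ≤ R → ∀ f : V → ℝ,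
    ∀ x ∈ gBall G z (CTP⁻¹ * R), ∀ y ∈ gBall G z (CTP⁻¹ * R),
      ENNReal.ofReal (|f x - f y| ^ p) ≤
        ENNReal.ofReal (CTP * R ^ β) * (maxEnergy G p f R x + maxEnergy G p f R y)

/-- The volume growth condition `VD(α)` with constant `CD`. -/
def VDgrowth (G : SimpleGraph V) (α CD : ℝ) : Prop :=
  ∀ (x y : V) (r R : ℝ), 1 ≤ r → r ≤ R →
    (gBall G x R).Finite ∧
      ((gBall G x R).ncard : ℝ) ≤
        CD * (((G.dist x y : ℝ) + R) / r) ^ α * ((gBall G y r).ncard : ℝ)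

/-- `d_f`-Ahlfors regularity of the graph `AR(d_f)` with constant `CAR`. -/
def ARreg (G : SimpleGraph V) (df CAR : ℝ) : Prop :=
  ∀ (x : V) (R : ℝ), 1 ≤ R → ENNReal.ofReal R ≤ gDiam G Set.univ →
    (gBall G x R).Finite ∧
      CAR⁻¹ * R ^ df ≤ ((gBall G x R).ncard : ℝ) ∧
      ((gBall G x R).ncard : ℝ) ≤ CAR * R ^ df

/-- Discrete `p`-capacity `cap_p(A₀, A₁; A₂)`. -/
noncomputable def pCap (G : SimpleGraph V) (p : ℝ) (A₀ A₁ A₂ : Set V) : ℝ≥0∞ :=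
  ⨅ (f : V → ℝ) (_ : ∀ x ∈ A₀, f x = 0) (_ : ∀ x ∈ A₁, f x = 1), pEnergy G p A₂ f

/-- The capacity upper bound `cap_{p,≤}(β)` with constants `Ccap`, `Acap`. -/
def CapUB (G : SimpleGraph V) (p β Ccap Acap : ℝ) : Prop :=
  ∀ (x : V) (R : ℝ), 1 ≤ R →
    ENNReal.ofReal (Acap * R) < gDiam G Set.univ →
    pCap G p (gBall G x R) ((gBall G x (2 * R))ᶜ) Set.univ ≤
      ENNReal.ofReal (Ccap * ((gBall G x R).ncard : ℝ) / R ^ β)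

/-- The discrete `p`-Laplacian. -/
noncomputable def pLap (G : SimpleGraph V) (p : ℝ) (f : V → ℝ) (x : V) : ℝ :=
  (∑ᶠ y ∈ G.neighborSet x, Real.sign (f y - f x) * |f y - f x| ^ (p - 1)) /
    ((G.neighborSet x).ncard : ℝ)

/-- The graph closure `Ā = A ∪ ∂A` of a vertex set. -/
def vClosure (G : SimpleGraph V) (A : Set V) : Set V :=
  A ∪ {x | ∃ y ∈ A, G.Adj x y}

/-- Real-valued sum of a symmetric function over the unordered edges within `A`. -/
noncomputable def edgeSum (G : SimpleGraph V) (A : Set V) (F : V → V → ℝ) : ℝ :=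
  (∑' e : {e : V × V // G.Adj e.1 e.2 ∧ e.1 ∈ A ∧ e.2 ∈ A}, F e.1.1 e.1.2) / 2

/-- The signed `p`-energy pairing `𝔈_p^G(f; g)`. -/
noncomputable def pEnergySigned (G : SimpleGraph V) (p : ℝ) (f g : V → ℝ) : ℝ :=
  edgeSum G Set.univ (fun x y => Real.sign (f y - f x) * |f y - f x| ^ (p - 1) * (g y - g x))

/-- Real-valued discrete `p`-energy `𝔈_p^G(f)`. -/
noncomputable def pEnergyReal (G : SimpleGraph V) (p : ℝ) (f : V → ℝ) : ℝ :=
  edgeSum G Set.univ (fun x y => |f x - f y| ^ p)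

end Paper
open scoped ENNReal

namespace Stmt2Aux

/-- Discrete intermediate value theorem. -/
lemma ivt (f : ℕ → ℕ) (h0 : f 0 = 0) (hstep : ∀ t, f (t + 1) ≤ f t + 1)
    {L j : ℕ} (hj : j ≤ f L) : ∃ t, f t = j := by
  classical
  have hex : ∃ t, j ≤ f t := ⟨L, hj⟩
  obtain ⟨t0, hP, hmin⟩ : ∃ t0, j ≤ f t0 ∧ ∀ s < t0, ¬ j ≤ f s :=
    ⟨Nat.find hex, Nat.find_spec hex, fun s hs => Nat.find_min hex hs⟩
  match t0, hP, hmin with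
  | 0, hP, _ => exact ⟨0, by omega⟩
  | (s+1), hP, hmin =>
    have h1 : ¬ j ≤ f s := hmin s (Nat.lt_succ_self s)
    have h2 := hstep s
    exact ⟨s + 1, by omega⟩

/-- Greedy chain of intervals covering `[p, n)`:
each element `c` is an index `< n` whose interval `(c - (m c - 1), c + (m c - 1))`
contains the current position `p`, has maximal right end among such, and the chain
continues from position `c + m c`. -/
def GChain (n : ℕ) (m : ℕ → ℕ) : ℕ → List ℕ → Prop
  | p, [] => n ≤ p
  | p, c :: L => c < n ∧ c < p + m c ∧ p < c + m c ∧
      (∀ j, j < n → j < p + m j → p < j + m j → j + m j ≤ c + m c) ∧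
      GChain n m (c + m c) L

lemma gchain_exists (n : ℕ) (m : ℕ → ℕ) (hm : ∀ j, 1 ≤ m j) :
    ∀ k p, n ≤ p + k → ∃ L, GChain n m p L := by
  intro k
  induction k with
  | zero => intro p hp; exact ⟨[], by simpa [GChain] using hp⟩
  | succ k IH =>
    intro p hp
    by_cases hnp : n ≤ p
    · exact ⟨[], by simpa [GChain] using hnp⟩
    push_neg at hnp
    classical
    set s : Finset ℕ := (Finset.range n).filter (fun j => j < p + m j ∧ p < j + m j) with hs
    have hps : p ∈ s := by
      simp only [hs, Finset.mem_filter, Finset.mem_range]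
      refine ⟨hnp, ?_, ?_⟩ <;> have := hm p <;> omega
    obtain ⟨c, hcs, hcmax⟩ := s.exists_max_image (fun j => j + m j) ⟨p, hps⟩
    simp only [hs, Finset.mem_filter, Finset.mem_range] at hcs
    obtain ⟨hc1, hc2, hc3⟩ := hcs
    obtain ⟨L, hL⟩ := IH (c + m c) (by omega)
    refine ⟨c :: L, hc1, hc2, hc3, ?_, hL⟩
    intro j hj1 hj2 hj3
    exact hcmax j (by simp only [hs, Finset.mem_filter, Finset.mem_range]; exact ⟨hj1, hj2, hj3⟩)

lemma gchain_cover (n : ℕ) (m : ℕ → ℕ) :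
    ∀ (L : List ℕ) (p : ℕ), GChain n m p L → n ≤ p + 2 * (L.map m).sum := by
  intro L
  induction L with
  | nil => intro p h; simpa [GChain] using h
  | cons c L IH =>
    intro p h
    obtain ⟨h1, h2, h3, h4, h5⟩ := h
    have := IH (c + m c) h5
    simp only [List.map_cons, List.sum_cons]
    omega

lemma gchain_lt (n : ℕ) (m : ℕ → ℕ) :
    ∀ (L : List ℕ) (p : ℕ), GChain n m p L → ∀ j ∈ L, j < n := by
  intro L
  induction L with
  | nil => intro p _ j hj; cases hj
  | cons c L IH =>
    intro p h j hj
    obtain ⟨h1, _, _, _, h5⟩ := h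
    rcases List.mem_cons.mp hj with rfl | hj
    · exact h1
    · exact IH _ h5 j hj

lemma gchain_lb (n : ℕ) (m : ℕ → ℕ) :
    ∀ (L : List ℕ) (p : ℕ), GChain n m p L → ∀ j ∈ L, p < j + m j := by
  intro L
  induction L with
  | nil => intro p _ j hj; cases hj
  | cons c L IH =>
    intro p h j hj
    obtain ⟨h1, h2, h3, h4, h5⟩ := h
    rcases List.mem_cons.mp hj with rfl | hj
    · exact h3
    · have := IH _ h5 j hj; omega

/-- Key separation property: any element after the immediate successor of `c`
is separated from `c`. -/
lemma gchain_key (n : ℕ) (m : ℕ → ℕ) (p c c' : ℕ) (L : List ℕ)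
    (h : GChain n m p (c :: c' :: L)) : ∀ j ∈ L, c + m c + m j ≤ j + 1 := by
  obtain ⟨h1, h2, h3, h4, h1', h2', h3', h4', h5'⟩ := h
  intro j hj
  have hjn : j < n := gchain_lt n m L _ h5' j hj
  have hjlb : c' + m c' < j + m j := gchain_lb n m L _ h5' j hj
  by_contra hcon
  push_neg at hcon
  have hmax := h4' j hjn (by omega) (by omega)
  omega

/-- Every other element of a list. -/
def alt1 : List ℕ → List ℕ
  | [] => []
  | [a] => [a]
  | a :: _ :: L => a :: alt1 L

lemma alt1_subset : ∀ (L : List ℕ), ∀ j ∈ alt1 L, j ∈ L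
  | [] => by simp [alt1]
  | [a] => by simp [alt1]
  | a :: b :: L => by
      intro j hj
      rcases List.mem_cons.mp hj with rfl | hj
      · exact List.mem_cons_self
      · have := alt1_subset L j hj
        simp [this]

lemma alt1_sum (m : ℕ → ℕ) : ∀ (L : List ℕ),
    (L.map m).sum ≤ ((alt1 L).map m).sum + ((alt1 L.tail).map m).sum
  | [] => by simp [alt1]
  | [a] => by simp [alt1]
  | a :: b :: L => by
      have := alt1_sum m (b :: L)
      simp only [alt1, List.map_cons, List.sum_cons, List.tail_cons] at *
      omega

lemma gchain_alt1_pairwise (n : ℕ) (m : ℕ → ℕ) :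
    ∀ (L : List ℕ) (p : ℕ), GChain n m p L →
      (alt1 L).Pairwise (fun i j => i + m i + m j ≤ j + 1)
  | [] => by intro p h; simp [alt1]
  | [a] => by intro p h; simp [alt1]
  | a :: b :: L => by
      intro p h
      have h5 : GChain n m (a + m a) (b :: L) := h.2.2.2.2
      have h5' : GChain n m (b + m b) L := h5.2.2.2.2
      have IH := gchain_alt1_pairwise n m L (b + m b) h5'
      simp only [alt1, List.pairwise_cons]
      refine ⟨fun j hj => ?_, IH⟩
      exact gchain_key n m p a b L h j (alt1_subset L j hj)

/-- Selection: a separated subfamily carrying at least a quarter of the total coverage. -/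
lemma gchain_select (n : ℕ) (m : ℕ → ℕ) (L : List ℕ) (h : GChain n m 0 L) :
    ∃ S : List ℕ, S.Pairwise (fun i j => i + m i + m j ≤ j + 1) ∧
      (∀ j ∈ S, j ∈ L) ∧ n ≤ 4 * (S.map m).sum := by
  have hcov := gchain_cover n m L 0 h
  have hsum := alt1_sum m L
  have hp1 := gchain_alt1_pairwise n m L 0 h
  have hp2 : (alt1 L.tail).Pairwise (fun i j => i + m i + m j ≤ j + 1) := by
    cases L with
    | nil => simp [alt1]
    | cons c L => exact gchain_alt1_pairwise n m L (c + m c) h.2.2.2.2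
  have hsub2 : ∀ j ∈ alt1 L.tail, j ∈ L := by
    intro j hj
    have := alt1_subset L.tail j hj
    cases L with
    | nil => cases this
    | cons c L => exact List.mem_cons_of_mem _ this
  by_cases hc : ((alt1 L).map m).sum ≤ ((alt1 L.tail).map m).sum
  · exact ⟨alt1 L.tail, hp2, hsub2, by omega⟩
  · exact ⟨alt1 L, hp1, alt1_subset L, by omega⟩

variable {V : Type*}

lemma disj_ptwise (g : V → ℝ≥0∞) (B : ℕ → Set V) :
    ∀ S : List ℕ, S.Pairwise (fun i j => Disjoint (B i) (B j)) →
      ∀ v, (S.map (fun j => (B j).indicator g v)).sum ≤ g v := by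
  intro S
  induction S with
  | nil => intro _ v; simp
  | cons a S IH =>
    intro h v
    obtain ⟨hd, ht⟩ := List.pairwise_cons.mp h
    simp only [List.map_cons, List.sum_cons]
    by_cases hv : v ∈ B a
    · have hrest : (S.map (fun j => (B j).indicator g v)).sum = 0 := by
        apply List.sum_eq_zero
        intro x hx
        obtain ⟨j, hj, rfl⟩ := List.mem_map.mp hx
        have : v ∉ B j := fun hvj => (hd j hj).ne_of_mem hv hvj rfl
        simp [Set.indicator_of_notMem this]
      rw [hrest, Set.indicator_of_mem hv]
      simp
    · rw [Set.indicator_of_notMem hv]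
      simpa using IH ht v

lemma disj_sum (g : V → ℝ≥0∞) (B : ℕ → Set V)
    (S : List ℕ) (h : S.Pairwise (fun i j => Disjoint (B i) (B j))) :
    (S.map (fun j => ∑' v, (B j).indicator g v)).sum ≤ ∑' v, g v := by
  have hswap : (S.map (fun j => ∑' v, (B j).indicator g v)).sum
      = ∑' v, (S.map (fun j => (B j).indicator g v)).sum := by
    induction S with
    | nil => simp
    | cons a S IH =>
      simp only [List.map_cons, List.sum_cons, IH (List.Pairwise.sublist (List.sublist_cons_self a S) h)]
      exact (ENNReal.tsum_add).symm
  rw [hswap]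
  exact ENNReal.tsum_le_tsum (disj_ptwise g B S h)

lemma list_sum_ofReal_mul (c : ℝ) (hc : 0 ≤ c) (m : ℕ → ℕ) (T : ℝ≥0∞) :
    ∀ S : List ℕ,
      (S.map (fun j => ENNReal.ofReal (c * m j) * T)).sum
        = ENNReal.ofReal (c * ((S.map m).sum : ℕ)) * T := by
  intro S
  induction S with
  | nil => simp
  | cons a S IH =>
    simp only [List.map_cons, List.sum_cons, IH]
    rw [← add_mul, ← ENNReal.ofReal_add (by positivity) (by positivity)]
    congr 2
    push_cast
    ring

end Stmt2Aux

/-- linear decay of measure on a connected set.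
Let `G` be a locally finite connected simple graph, `ν : V → [0,∞)` a weight with finite
total mass, and `A ⊆ V` a connected subset with at least two points and finite diameter.
Then some `z ∈ A` satisfies `ν(B(z,r)) ≤ (8/diam A)·max(r,1)·ν(V)` for every `r > 0`. -/
theorem statement2 {V : Type*} (G : SimpleGraph V) (hconn : G.Connected)
    (hlf : Paper.LocFin G)
    (ν : V → ℝ≥0) (hν : (∑' v : V, (ν v : ℝ≥0∞)) ≠ ⊤)
    (A : Set V) (hA : Paper.ConnSubset G A) (hA2 : A.Nontrivial)
    (hdiam : Paper.gDiam G A ≠ ⊤) :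
    ∃ z ∈ A, ∀ r : ℝ, 0 < r →
      (∑' v : Paper.gBall G z r, (ν v : ℝ≥0∞)) ≤
        ENNReal.ofReal (8 / (Paper.gDiam G A).toReal * max r 1) * ∑' v : V, (ν v : ℝ≥0∞) := by
  classical
  set g : V → ℝ≥0∞ := fun v => (ν v : ℝ≥0∞) with hgdef
  obtain ⟨a, ha, b, hb, hab⟩ := hA2
  -- trivial case: zero total mass
  by_cases hT0 : (∑' v : V, (ν v : ℝ≥0∞)) = 0
  · refine ⟨a, ha, fun r hr => ?_⟩
    have hz : ∀ v, (ν v : ℝ≥0∞) = 0 := fun v => by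
      have := ENNReal.tsum_eq_zero.mp hT0 v; simpa using this
    have : (∑' v : Paper.gBall G a r, (ν v : ℝ≥0∞)) = 0 := by simp [hz]
    rw [this]; exact zero_le
  -- the diameter is attained as a natural number N ≥ 1
  have hub : ∀ x ∈ A, ∀ y ∈ A, (G.dist x y : ℝ≥0∞) ≤ Paper.gDiam G A := by
    intro x hx y hy
    calc (G.dist x y : ℝ≥0∞) ≤ ⨆ y ∈ A, (G.dist x y : ℝ≥0∞) :=
          le_biSup (fun y => (G.dist x y : ℝ≥0∞)) hy
    _ ≤ Paper.gDiam G A :=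
          le_biSup (fun x => ⨆ y ∈ A, (G.dist x y : ℝ≥0∞)) hx
  have hbddnat : ∀ x ∈ A, ∀ y ∈ A, G.dist x y ≤ ⌈(Paper.gDiam G A).toReal⌉₊ := by
    intro x hx y hy
    have h1 := ENNReal.toReal_mono hdiam (hub x hx y hy)
    rw [ENNReal.toReal_natCast] at h1
    exact_mod_cast h1.trans (Nat.le_ceil _)
  set Dset : Set ℕ := {d | ∃ x ∈ A, ∃ y ∈ A, G.dist x y = d} with hDset
  have hne : Dset.Nonempty := ⟨G.dist a b, a, ha, b, hb, rfl⟩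
  have hbdd : BddAbove Dset := by
    refine ⟨⌈(Paper.gDiam G A).toReal⌉₊, ?_⟩
    rintro d ⟨x, hx, y, hy, rfl⟩
    exact hbddnat x hx y hy
  set N := sSup Dset with hNdef
  obtain ⟨x, hx, y, hy, hxy⟩ : ∃ x ∈ A, ∃ y ∈ A, G.dist x y = N := Nat.sSup_mem hne hbdd
  have hNmax : ∀ x' ∈ A, ∀ y' ∈ A, G.dist x' y' ≤ N := fun x' hx' y' hy' =>
    le_csSup hbdd ⟨x', hx', y', hy', rfl⟩
  have hN1 : 1 ≤ N := le_trans (hconn.pos_dist_of_ne hab) (hNmax a ha b hb)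
  have hgd : Paper.gDiam G A = (N : ℝ≥0∞) := by
    apply le_antisymm
    · refine iSup₂_le fun x' hx' => iSup₂_le fun y' hy' => ?_
      exact Nat.cast_le.mpr (hNmax x' hx' y' hy')
    · rw [← hxy]; exact hub x hx y hy
  have hgdr : (Paper.gDiam G A).toReal = (N : ℝ) := by
    rw [hgd]; exact ENNReal.toReal_natCast _
  have hNR : (0 : ℝ) < N := by exact_mod_cast hN1
  -- a walk in A from x to y, and points at every distance j ≤ N from x
  obtain ⟨p⟩ := hA.preconnected ⟨x, hx⟩ ⟨y, hy⟩
  set u : ℕ → V := fun t => ((p.getVert t : A) : V) with hudef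
  have huA : ∀ t, u t ∈ A := fun t => (p.getVert t).2
  have hu0 : u 0 = x := by simp [hudef, SimpleGraph.Walk.getVert_zero]
  have huL : u p.length = y := by simp [hudef, SimpleGraph.Walk.getVert_length]
  set f : ℕ → ℕ := fun t => G.dist x (u t) with hfdef
  have hf0 : f 0 = 0 := by simp [hfdef, hu0]
  have hfL : f p.length = N := by simp [hfdef, huL, hxy]
  have hstep : ∀ t, f (t + 1) ≤ f t + 1 := by
    intro t
    by_cases ht : t < p.length
    · have hadj : (G.induce A).Adj (p.getVert t) (p.getVert (t + 1)) :=
        p.adj_getVert_succ ht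
      have hGadj : G.Adj (u t) (u (t + 1)) := by
        simpa [hudef] using hadj
      have h1 : G.dist (u t) (u (t + 1)) = 1 := SimpleGraph.dist_eq_one_iff_adj.mpr hGadj
      have htri := hconn.dist_triangle (u := x) (v := u t) (w := u (t + 1))
      simp only [hfdef]
      omega
    · have h1 : u (t + 1) = u t := by
        have e1 := p.getVert_of_length_le (i := t) (by omega)
        have e2 := p.getVert_of_length_le (i := t + 1) (by omega)
        simp [hudef, e1, e2]
      simp [hfdef, h1]
  have hwj : ∀ j, ∃ v, v ∈ A ∧ (j ≤ N → G.dist x v = j) := by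
    intro j
    by_cases hj : j ≤ N
    · obtain ⟨t, htf⟩ := Stmt2Aux.ivt f hf0 hstep (L := p.length) (j := j) (by omega)
      exact ⟨u t, huA t, fun _ => htf⟩
    · exact ⟨x, hx, fun h => absurd h hj⟩
  choose w hwA hwd using hwj
  -- suppose no point of A works
  by_contra hcon
  push_neg at hcon
  -- for each j ≤ N, a bad natural radius
  have hbad : ∀ j, ∃ k : ℕ, 1 ≤ k ∧ (j ≤ N →
      ENNReal.ofReal (4 / (N : ℝ) * k) * (∑' v : V, (ν v : ℝ≥0∞)) <
        ∑' v, (Paper.gBall G (w j) ((k : ℕ) : ℝ)).indicator g v) := by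
    intro j
    by_cases hj : j ≤ N
    · obtain ⟨r, hr, hlt⟩ := hcon (w j) (hwA j)
      rw [hgdr] at hlt
      have hx1 : (1 : ℝ) ≤ max r 1 := le_max_right _ _
      refine ⟨⌈max r 1⌉₊, Nat.one_le_ceil_iff.mpr (by linarith), fun _ => ?_⟩
      have hsub : Paper.gBall G (w j) r ⊆ Paper.gBall G (w j) ((⌈max r 1⌉₊ : ℕ) : ℝ) := by
        intro v hv
        simp only [Paper.gBall, Set.mem_setOf_eq] at hv ⊢
        have h2 : (max r 1 : ℝ) ≤ (⌈max r 1⌉₊ : ℝ) := Nat.le_ceil _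
        have h1 : r ≤ max r 1 := le_max_left _ _
        linarith
      have hmono : (∑' v : Paper.gBall G (w j) r, (ν v : ℝ≥0∞)) ≤
          ∑' v, (Paper.gBall G (w j) ((⌈max r 1⌉₊ : ℕ) : ℝ)).indicator g v := by
        calc (∑' v : Paper.gBall G (w j) r, (ν v : ℝ≥0∞))
            = ∑' v, (Paper.gBall G (w j) r).indicator g v := tsum_subtype _ g
        _ ≤ _ := ENNReal.tsum_le_tsum fun v =>
          Set.indicator_le_indicator_of_subset hsub (fun _ => zero_le) v
      have hcle : ENNReal.ofReal (4 / (N : ℝ) * (⌈max r 1⌉₊ : ℕ)) *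
            (∑' v : V, (ν v : ℝ≥0∞)) ≤
          ENNReal.ofReal (8 / (N : ℝ) * max r 1) * (∑' v : V, (ν v : ℝ≥0∞)) := by
        refine mul_le_mul_of_nonneg_right (ENNReal.ofReal_le_ofReal ?_) (by positivity)
        have hceil : (⌈max r 1⌉₊ : ℝ) < max r 1 + 1 := Nat.ceil_lt_add_one (by linarith)
        have h2 : (⌈max r 1⌉₊ : ℝ) ≤ 2 * max r 1 := by linarith
        have h4 : (0 : ℝ) ≤ 4 / (N : ℝ) := by positivity
        calc 4 / (N : ℝ) * (⌈max r 1⌉₊ : ℕ) ≤ 4 / (N : ℝ) * (2 * max r 1) := by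
              exact mul_le_mul_of_nonneg_left h2 h4
        _ = 8 / (N : ℝ) * max r 1 := by ring
      exact lt_of_le_of_lt hcle (lt_of_lt_of_le hlt hmono)
    · exact ⟨1, le_rfl, fun h => absurd h hj⟩
  choose m hm1 hm2 using hbad
  -- greedy chain and separated selection
  obtain ⟨L, hL⟩ := Stmt2Aux.gchain_exists (N + 1) m hm1 (N + 1) 0 (by omega)
  obtain ⟨S, hSpair, hSsub, hSsum4⟩ := Stmt2Aux.gchain_select (N + 1) m L hL
  have hSN : ∀ j ∈ S, j ≤ N := fun j hj => by
    have := Stmt2Aux.gchain_lt (N + 1) m L 0 hL j (hSsub j hj); omega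
  -- distances between the marked points
  have hdistlb : ∀ i j, i ≤ N → j ≤ N → j ≤ i + G.dist (w i) (w j) := by
    intro i j hi hj
    have di := hwd i hi
    have dj := hwd j hj
    have htri := hconn.dist_triangle (u := x) (v := w i) (w := w j)
    omega
  -- the selected balls are pairwise disjoint
  have hdisj : S.Pairwise (fun i j =>
      Disjoint (Paper.gBall G (w i) ((m i : ℕ) : ℝ))
        (Paper.gBall G (w j) ((m j : ℕ) : ℝ))) := by
    refine List.Pairwise.imp_of_mem ?_ hSpair
    intro i j hi hj hsep
    rw [Set.disjoint_left]
    intro v hvi hvj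
    simp only [Paper.gBall, Set.mem_setOf_eq] at hvi hvj
    have hvi' : G.dist (w i) v < m i := by exact_mod_cast hvi
    have hvj' : G.dist (w j) v < m j := by exact_mod_cast hvj
    have h2 := hdistlb i j (hSN i hi) (hSN j hj)
    have htri := hconn.dist_triangle (u := w i) (v := v) (w := w j)
    have hcomm : G.dist v (w j) = G.dist (w j) v := SimpleGraph.dist_comm
    have hmi := hm1 i
    have hmj := hm1 j
    omega
  -- summing up
  set T := ∑' v : V, (ν v : ℝ≥0∞) with hTdef
  have hub1 : ((S.map (fun j => ENNReal.ofReal (4 / (N : ℝ) * m j) * T)).sum : ℝ≥0∞) ≤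
      (S.map (fun j => ∑' v, (Paper.gBall G (w j) ((m j : ℕ) : ℝ)).indicator g v)).sum := by
    refine List.sum_le_sum fun j hj => ?_
    exact le_of_lt (hm2 j (hSN j hj))
  have hub2 : ((S.map (fun j =>
      ∑' v, (Paper.gBall G (w j) ((m j : ℕ) : ℝ)).indicator g v)).sum : ℝ≥0∞) ≤ T := by
    have := Stmt2Aux.disj_sum g (fun j => Paper.gBall G (w j) ((m j : ℕ) : ℝ)) S hdisj
    exact this
  have heq := Stmt2Aux.list_sum_ofReal_mul (4 / (N : ℝ)) (by positivity) m T S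
  have hSig : (N : ℝ) + 1 ≤ 4 * (((S.map m).sum : ℕ) : ℝ) := by exact_mod_cast hSsum4
  have hgt1' : (1 : ℝ) < 4 / (N : ℝ) * (((S.map m).sum : ℕ) : ℝ) := by
    rw [div_mul_eq_mul_div, lt_div_iff₀ hNR]
    linarith
  have hgt1 : (1 : ℝ≥0∞) < ENNReal.ofReal (4 / (N : ℝ) * (((S.map m).sum : ℕ) : ℝ)) := by
    rw [← ENNReal.ofReal_one]
    exact (ENNReal.ofReal_lt_ofReal_iff (lt_trans one_pos hgt1')).mpr hgt1'
  have hTlt : T < ENNReal.ofReal (4 / (N : ℝ) * (((S.map m).sum : ℕ) : ℝ)) * T := by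
    conv_lhs => rw [← one_mul T]
    exact ENNReal.mul_lt_mul_left hT0 hν hgt1
  rw [← heq] at hTlt
  exact absurd (lt_of_lt_of_le hTlt (le_trans hub1 hub2)) (lt_irrefl T)
end

section
/- Let p ∈ [1,∞) and β > 0. Assume deg(G) < ∞, the counting measure on G is volume doubling (there exists C_D ≥ 1 with #B(x,2r) ≤ C_D·#B(x,r) for all x ∈ V and r > 0), and G satisfies TP_p(β). Then there exist constants C > 0 and A > 0, depending only on p, C_D, deg(G) and C_TP, such that Σ_{z∈B(x,R)} |f(z) − a|^p ≤ C·R^β·𝔈_{p,B(x,AR)}^G(f) for every x ∈ V, R ≥ 1, f : V → ℝ, and every median a of f on B(x,R), i.e., every a ∈ ℝ with min(#{z ∈ B(x,R) : f(z) ≥ a}, #{z ∈ B(x,R) : f(z) ≤ a}) ≥ #B(x,R)/2. In particular, G satisfies PI_p(β). -/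
open scoped ENNReal NNReal

namespace S6
open Paper
open scoped ENNReal NNReal

variable {V : Type}

/-! ### Ball basics -/

lemma mem_gBall {G : SimpleGraph V} {x y : V} {r : ℝ} :
    y ∈ gBall G x r ↔ (G.dist x y : ℝ) < r := Iff.rfl

lemma mem_gBall_self {G : SimpleGraph V} {x : V} {r : ℝ} (hr : 0 < r) : x ∈ gBall G x r := by
  simp [mem_gBall, SimpleGraph.dist_self, hr]

lemma gBall_mono {G : SimpleGraph V} {x : V} {r s : ℝ} (h : r ≤ s) :
    gBall G x r ⊆ gBall G x s := fun _ hy => lt_of_lt_of_le hy h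

lemma gBall_triangle {G : SimpleGraph V} (hc : G.Connected) {x y v : V} {R r : ℝ}
    (hy : y ∈ gBall G x R) (hv : v ∈ gBall G y r) : v ∈ gBall G x (R + r) := by
  have h0 : G.dist x v ≤ G.dist x y + G.dist y v := hc.dist_triangle
  have h1 : (G.dist x v : ℝ) ≤ (G.dist x y : ℝ) + (G.dist y v : ℝ) := by exact_mod_cast h0
  exact lt_of_le_of_lt h1 (add_lt_add hy hv)

lemma gBall_empty {G : SimpleGraph V} {x : V} {r : ℝ} (hr : r ≤ 0) : gBall G x r = ∅ := by
  ext y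
  simp only [mem_gBall, Set.mem_empty_iff_false, iff_false, not_lt]
  exact le_trans hr (by positivity)

section Doubling

variable {G : SimpleGraph V} {CD : ℝ}

/-- The doubling hypothesis. -/
def Doubling (G : SimpleGraph V) (CD : ℝ) : Prop :=
  ∀ (x : V) (r : ℝ), 0 < r → (Paper.gBall G x (2 * r)).Finite ∧
    ((Paper.gBall G x (2 * r)).ncard : ℝ) ≤ CD * ((Paper.gBall G x r).ncard : ℝ)

lemma Doubling.ball_finite (hD : Doubling G CD) (x : V) (r : ℝ) :
    (gBall G x r).Finite := by
  rcases le_or_gt r 0 with h | h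
  · rw [gBall_empty h]; exact Set.finite_empty
  · have := (hD x (r / 2) (by linarith)).1
    have hr : 2 * (r / 2) = r := by ring
    rwa [hr] at this

lemma Doubling.card_le (hD : Doubling G CD) (x : V) {r s : ℝ}
    (hr : 0 < r) (hs : s ≤ 2 * r) :
    ((gBall G x s).ncard : ℝ) ≤ CD * ((gBall G x r).ncard : ℝ) := by
  have h1 : ((gBall G x s).ncard : ℝ) ≤ ((gBall G x (2 * r)).ncard : ℝ) := by
    exact_mod_cast Nat.cast_le.2 (Set.ncard_le_ncard (gBall_mono hs) (hD.ball_finite x _))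
  exact h1.trans (hD x r hr).2

lemma Doubling.card3 (hD : Doubling G CD) (hCD : 1 ≤ CD) (x : V) {r : ℝ} (hr : 0 < r) :
    ((gBall G x (3 * r)).ncard : ℝ) ≤ CD ^ 2 * ((gBall G x r).ncard : ℝ) := by
  have h1 : ((gBall G x (3 * r)).ncard : ℝ) ≤ CD * ((gBall G x (2 * r)).ncard : ℝ) :=
    hD.card_le x (by linarith) (by linarith)
  have h2 : ((gBall G x (2 * r)).ncard : ℝ) ≤ CD * ((gBall G x r).ncard : ℝ) := (hD x r hr).2
  nlinarith [Nat.cast_nonneg (α := ℝ) (gBall G x (2*r)).ncard, Nat.cast_nonneg (α := ℝ) (gBall G x r).ncard]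

end Doubling

/-! ### pEnergy via indicators -/

def eSet (G : SimpleGraph V) (A : Set V) : Set (V × V) :=
  {e | G.Adj e.1 e.2 ∧ e.1 ∈ A ∧ e.2 ∈ A}

noncomputable def ew (p : ℝ) (f : V → ℝ) (e : V × V) : ℝ≥0∞ :=
  ENNReal.ofReal (|f e.1 - f e.2| ^ p)

lemma pEnergy_eq (G : SimpleGraph V) (p : ℝ) (A : Set V) (f : V → ℝ) :
    Paper.pEnergy G p A f = (∑' e : V × V, (eSet G A).indicator (ew p f) e) / 2 := by
  rw [Paper.pEnergy, ← tsum_subtype (eSet G A) (ew p f)]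
  rfl

lemma pEnergy_mono (G : SimpleGraph V) (p : ℝ) {A A' : Set V} (h : A ⊆ A') (f : V → ℝ) :
    Paper.pEnergy G p A f ≤ Paper.pEnergy G p A' f := by
  rw [pEnergy_eq, pEnergy_eq]
  refine ENNReal.div_le_div (ENNReal.tsum_le_tsum fun e => ?_) le_rfl
  refine Set.indicator_le_indicator_of_subset (fun e he => ?_) (fun _ => zero_le) e
  exact ⟨he.1, h he.2.1, h he.2.2⟩

lemma pEnergy_compare (G : SimpleGraph V) {p : ℝ} (hp : 0 ≤ p) (A : Set V) {f g : V → ℝ}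
    (h : ∀ u v : V, |g u - g v| ≤ |f u - f v|) :
    Paper.pEnergy G p A g ≤ Paper.pEnergy G p A f := by
  rw [pEnergy_eq, pEnergy_eq]
  refine ENNReal.div_le_div (ENNReal.tsum_le_tsum fun e => ?_) le_rfl
  by_cases he : e ∈ eSet G A
  · rw [Set.indicator_of_mem he, Set.indicator_of_mem he]
    exact ENNReal.ofReal_le_ofReal (Real.rpow_le_rpow (abs_nonneg _) (h _ _) hp)
  · rw [Set.indicator_of_notMem he, Set.indicator_of_notMem he]

lemma pEnergy_sum_le (G : SimpleGraph V) (p : ℝ) {ι : Type} (T : Finset ι) (A : ι → Set V)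
    (A' : Set V) (hdisj : (T : Set ι).PairwiseDisjoint A) (hsub : ∀ i ∈ T, A i ⊆ A')
    (f : V → ℝ) :
    ∑ i ∈ T, Paper.pEnergy G p (A i) f ≤ Paper.pEnergy G p A' f := by
  classical
  simp only [pEnergy_eq]
  simp only [div_eq_mul_inv]
  rw [← Finset.sum_mul, ← Summable.tsum_finsetSum (fun i _ => ENNReal.summable)]
  refine mul_le_mul' (ENNReal.tsum_le_tsum fun e => ?_) le_rfl
  by_cases he : ∃ i ∈ T, e ∈ eSet G (A i)
  · obtain ⟨i₀, hi₀T, hi₀⟩ := he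
    have hsum : ∑ i ∈ T, (eSet G (A i)).indicator (ew p f) e
        = (eSet G (A i₀)).indicator (ew p f) e := by
      refine Finset.sum_eq_single i₀ (fun j hjT hji => ?_) (fun h => absurd hi₀T h)
      rw [Set.indicator_of_notMem]
      intro hj
      have : e.1 ∈ A j ⊓ A i₀ := ⟨hj.2.1, hi₀.2.1⟩
      exact (hdisj hjT hi₀T hji).le_bot this
    rw [hsum, Set.indicator_of_mem hi₀, Set.indicator_of_mem]
    exact ⟨hi₀.1, hsub i₀ hi₀T hi₀.2.1, hsub i₀ hi₀T hi₀.2.2⟩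
  · push_neg at he
    have : ∀ i ∈ T, (eSet G (A i)).indicator (ew p f) e = 0 := fun i hi =>
      Set.indicator_of_notMem (he i hi) _
    rw [Finset.sum_congr rfl this, Finset.sum_const, smul_zero]
    exact zero_le

end S6

namespace S6
open Paper MeasureTheory
open scoped ENNReal NNReal

/-! ### Truncations -/

noncomputable def tk (k : ℤ) : ℝ := 2 ^ k

lemma tk_pos (k : ℤ) : 0 < tk k := by unfold tk; positivity

lemma tk_mono {k l : ℤ} (h : k ≤ l) : tk k ≤ tk l := zpow_le_zpow_right₀ one_le_two h

lemma tk_succ (k : ℤ) : tk (k + 1) = 2 * tk k := by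
  rw [tk, tk, zpow_add_one₀ (two_ne_zero)]; ring

noncomputable def τ (k : ℤ) (t : ℝ) : ℝ := min (max (t - tk k) 0) (tk k)

lemma τ_nonneg (k : ℤ) (t : ℝ) : 0 ≤ τ k t := le_min (le_max_right _ _) (tk_pos k).le

lemma τ_mono (k : ℤ) : Monotone (τ k) := fun a b hab =>
  min_le_min (max_le_max (by linarith) le_rfl) le_rfl

lemma τ_of_le {k : ℤ} {t : ℝ} (h : t ≤ tk k) : τ k t = 0 := by
  rw [τ, max_eq_right (by linarith), min_eq_left (tk_pos k).le]

lemma τ_of_ge {k : ℤ} {t : ℝ} (h : tk (k + 1) ≤ t) : τ k t = tk k := by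
  rw [tk_succ] at h
  have h0 := tk_pos k
  rw [τ, max_eq_left (by linarith), min_eq_right (by linarith)]

lemma τ_eq_clamp (k : ℤ) (t : ℝ) :
    τ k t = min (max t (tk k)) (tk (k + 1)) - tk k := by
  have h0 := tk_pos k
  rw [tk_succ, τ]
  rcases le_total t (tk k) with h1 | h1 <;> rcases le_total t (2 * tk k) with h2 | h2 <;>
    (simp only [min_def, max_def]; split_ifs <;> try linarith)

lemma clamp_diff_le (a b s t : ℝ) :
    ENNReal.ofReal (min (max t a) b - min (max s a) b) ≤
      volume (Set.Ioc s t ∩ Set.Ioc a b) := by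
  rw [Set.Ioc_inter_Ioc, Real.volume_Ioc]
  rcases le_or_gt (min (max t a) b) (min (max s a) b) with h | h
  · rw [ENNReal.ofReal_of_nonpos (by linarith)]; exact zero_le
  · have hb : min (max s a) b < b := lt_of_lt_of_le h (min_le_right _ _)
    have hsa_le : max s a ≤ b := by
      by_contra hc; push_neg at hc
      rw [min_eq_right hc.le] at hb; exact lt_irrefl _ hb
    have h2 : min (max s a) b = max s a := min_eq_left hsa_le
    have h3 : a < min (max t a) b := by
      calc a ≤ max s a := le_max_right _ _
        _ = min (max s a) b := h2.symm
        _ < _ := h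
    have ht : max t a = t := by
      rcases max_cases t a with ⟨he, _⟩ | ⟨he, hle⟩
      · exact he
      · exfalso; rw [he] at h3; exact absurd (min_le_left a b) (not_le.2 h3)
    rw [h2, ht]

lemma τ_sum_le {s t : ℝ} (hst : s ≤ t) (F : Finset ℤ) :
    ∑ k ∈ F, ENNReal.ofReal (τ k t - τ k s) ≤ ENNReal.ofReal (t - s) := by
  have hstep : ∀ k ∈ F, ENNReal.ofReal (τ k t - τ k s) ≤
      volume (Set.Ioc s t ∩ Set.Ioc (tk k) (tk (k + 1))) := by
    intro k _
    rw [τ_eq_clamp, τ_eq_clamp]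
    have : min (max t (tk k)) (tk (k + 1)) - tk k - (min (max s (tk k)) (tk (k + 1)) - tk k)
        = min (max t (tk k)) (tk (k + 1)) - min (max s (tk k)) (tk (k + 1)) := by ring
    rw [this]
    exact clamp_diff_le _ _ _ _
  calc ∑ k ∈ F, ENNReal.ofReal (τ k t - τ k s)
      ≤ ∑ k ∈ F, volume (Set.Ioc s t ∩ Set.Ioc (tk k) (tk (k + 1))) :=
        Finset.sum_le_sum hstep
    _ = volume (⋃ k ∈ F, Set.Ioc s t ∩ Set.Ioc (tk k) (tk (k + 1))) := by
        refine (measure_biUnion_finset ?_ fun k _ => (measurableSet_Ioc.inter measurableSet_Ioc)).symm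
        intro k _ l _ hkl
        refine Disjoint.mono inf_le_right inf_le_right ?_
        rw [Set.Ioc_disjoint_Ioc]
        rcases hkl.lt_or_gt with h | h
        · exact le_trans (inf_le_left.trans (tk_mono h)) le_sup_right
        · exact le_trans (inf_le_right.trans (tk_mono h)) le_sup_left
    _ ≤ volume (Set.Ioc s t) := measure_mono (Set.iUnion₂_subset fun k _ => Set.inter_subset_left)
    _ = ENNReal.ofReal (t - s) := Real.volume_Ioc

lemma rpow_le_of_le {d M q : ℝ} (hd : 0 ≤ d) (hdM : d ≤ M) (hq : 0 ≤ q) :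
    d ^ (q + 1) ≤ d * M ^ q := by
  rcases eq_or_lt_of_le hd with h0 | h0
  · rw [← h0, Real.zero_rpow (by linarith), zero_mul]
  · rw [Real.rpow_add h0, Real.rpow_one, mul_comm]
    exact mul_le_mul_of_nonneg_left (Real.rpow_le_rpow hd hdM hq) h0.le

lemma τ_rpow_tsum_le_aux {p : ℝ} (hp : 1 ≤ p) {s t : ℝ} (hst : s ≤ t) :
    ∑' k : ℤ, ENNReal.ofReal (|τ k t - τ k s| ^ p) ≤ ENNReal.ofReal (|t - s| ^ p) := by
  have habs : ∀ k : ℤ, |τ k t - τ k s| = τ k t - τ k s := fun k =>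
    abs_of_nonneg (sub_nonneg.2 (τ_mono k hst))
  have hM : |t - s| = t - s := abs_of_nonneg (sub_nonneg.2 hst)
  rw [ENNReal.tsum_eq_iSup_sum]
  refine iSup_le fun F => ?_
  have hnn : ∀ k ∈ F, 0 ≤ |τ k t - τ k s| ^ p := fun k _ => Real.rpow_nonneg (abs_nonneg _) _
  rw [← ENNReal.ofReal_sum_of_nonneg hnn]
  refine ENNReal.ofReal_le_ofReal ?_
  have hdle : ∀ k : ℤ, τ k t - τ k s ≤ t - s := by
    intro k
    have h := τ_sum_le hst {k}
    rw [Finset.sum_singleton] at h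
    exact (ENNReal.ofReal_le_ofReal_iff (by linarith)).1 h
  have hsum : ∑ k ∈ F, (τ k t - τ k s) ≤ t - s := by
    have h := τ_sum_le hst F
    rw [← ENNReal.ofReal_sum_of_nonneg (fun k _ => sub_nonneg.2 (τ_mono k hst))] at h
    exact (ENNReal.ofReal_le_ofReal_iff (by linarith)).1 h
  have hp1 : (0:ℝ) ≤ p - 1 := by linarith
  calc ∑ k ∈ F, |τ k t - τ k s| ^ p
      ≤ ∑ k ∈ F, (τ k t - τ k s) * (t - s) ^ (p - 1) := by
        refine Finset.sum_le_sum fun k _ => ?_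
        rw [habs k]
        have h2 := rpow_le_of_le (sub_nonneg.2 (τ_mono k hst)) (hdle k) hp1
        have h3 : p - 1 + 1 = p := by ring
        rwa [h3] at h2
    _ = (∑ k ∈ F, (τ k t - τ k s)) * (t - s) ^ (p - 1) := by rw [Finset.sum_mul]
    _ ≤ (t - s) * (t - s) ^ (p - 1) :=
        mul_le_mul_of_nonneg_right hsum (Real.rpow_nonneg (by linarith : (0:ℝ) ≤ t - s) (p - 1))
    _ = |t - s| ^ p := by
        have h5 := Real.rpow_add' (x := t - s) (by linarith : (0:ℝ) ≤ t - s)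
          (y := 1) (z := p - 1) (by intro hc; rw [show (1:ℝ) + (p-1) = p by ring] at hc; linarith)
        rw [Real.rpow_one] at h5
        rw [hM, ← h5]
        norm_num

lemma τ_rpow_tsum_le {p : ℝ} (hp : 1 ≤ p) (s t : ℝ) :
    ∑' k : ℤ, ENNReal.ofReal (|τ k t - τ k s| ^ p) ≤ ENNReal.ofReal (|t - s| ^ p) := by
  rcases le_total s t with hst | hst
  · exact τ_rpow_tsum_le_aux hp hst
  · calc ∑' k : ℤ, ENNReal.ofReal (|τ k t - τ k s| ^ p)
        = ∑' k : ℤ, ENNReal.ofReal (|τ k s - τ k t| ^ p) := by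
          congr 1; funext k; rw [abs_sub_comm]
      _ ≤ ENNReal.ofReal (|s - t| ^ p) := τ_rpow_tsum_le_aux hp hst
      _ = ENNReal.ofReal (|t - s| ^ p) := by rw [abs_sub_comm]

lemma pEnergy_tsum_trunc_le {V : Type} (G : SimpleGraph V) {p : ℝ} (hp : 1 ≤ p) (A : Set V)
    (g : V → ℝ) :
    ∑' k : ℤ, Paper.pEnergy G p A (fun z => τ k (g z)) ≤ Paper.pEnergy G p A g := by
  simp only [pEnergy_eq, div_eq_mul_inv]
  rw [ENNReal.tsum_mul_right]
  refine mul_le_mul' ?_ le_rfl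
  rw [ENNReal.tsum_comm]
  refine ENNReal.tsum_le_tsum fun e => ?_
  by_cases he : e ∈ eSet G A
  · simp only [Set.indicator_of_mem he, ew]
    exact τ_rpow_tsum_le hp (g e.2) (g e.1)
  · simp [Set.indicator_of_notMem he]

end S6

namespace S6
open Paper
open scoped ENNReal NNReal

variable {V : Type}

/-! ### Vitali covering -/

lemma vitali (G : SimpleGraph V) (hc : G.Connected) (rad : V → ℝ) (S : Finset V) :
    (∀ z ∈ S, 0 < rad z) →
    ∃ T : Finset V, T ⊆ S ∧
      ((T : Set V).Pairwise fun z z' => Disjoint (gBall G z (rad z)) (gBall G z' (rad z'))) ∧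
      ∀ z ∈ S, ∃ y ∈ T, z ∈ gBall G y (3 * rad y) := by
  classical
  induction S using Finset.strongInduction with
  | _ S ih =>
    intro hrad
    rcases S.eq_empty_or_nonempty with rfl | hne
    · exact ⟨∅, by simp⟩
    obtain ⟨i, hiS, hmax⟩ := S.exists_max_image rad hne
    set S' := S.filter (fun j => Disjoint (gBall G j (rad j)) (gBall G i (rad i))) with hS'
    have hiS' : i ∉ S' := by
      simp only [hS', Finset.mem_filter, not_and]
      intro _
      exact fun hdis => (hdis.ne_of_mem (mem_gBall_self (hrad i hiS))
        (mem_gBall_self (hrad i hiS))) rfl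
    have hssub : S' ⊆ S := Finset.filter_subset _ _
    have hlt : S' ⊂ S := ⟨hssub, fun h => hiS' (h hiS)⟩
    obtain ⟨T', hT'sub, hT'dis, hT'cov⟩ := ih S' hlt (fun z hz => hrad z (hssub hz))
    refine ⟨insert i T', Finset.insert_subset hiS (hT'sub.trans hssub), ?_, ?_⟩
    · rw [Finset.coe_insert]
      haveI : Std.Symm (fun z z' => Disjoint (gBall G z (rad z)) (gBall G z' (rad z'))) :=
        ⟨fun a b h => h.symm⟩
      rw [Set.pairwise_insert_of_symm]
      refine ⟨hT'dis, fun b hb _ => ?_⟩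
      have hbS' : b ∈ S' := hT'sub hb
      rw [hS', Finset.mem_filter] at hbS'
      exact hbS'.2.symm
    · intro z hz
      by_cases hzS' : z ∈ S'
      · obtain ⟨y, hy, hmem⟩ := hT'cov z hzS'
        exact ⟨y, Finset.mem_insert_of_mem hy, hmem⟩
      · refine ⟨i, Finset.mem_insert_self _ _, ?_⟩
        have hnd : ¬ Disjoint (gBall G z (rad z)) (gBall G i (rad i)) := by
          intro hdis
          exact hzS' (by rw [hS', Finset.mem_filter]; exact ⟨hz, hdis⟩)
        obtain ⟨w, hw1, hw2⟩ := Set.not_disjoint_iff.1 hnd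
        have h1 : G.dist i z ≤ G.dist i w + G.dist w z := hc.dist_triangle
        have h2 : (G.dist w z : ℝ) < rad z := by
          rw [SimpleGraph.dist_comm]; exact hw1
        have h3 : (G.dist i w : ℝ) < rad i := hw2
        have h4 : rad z ≤ rad i := hmax z hz
        show (G.dist i z : ℝ) < 3 * rad i
        have h5 : (G.dist i z : ℝ) ≤ (G.dist i w : ℝ) + (G.dist w z : ℝ) := by exact_mod_cast h1
        linarith [hrad i hiS]

/-! ### Maximal function -/

lemma exists_radius {G : SimpleGraph V} {p R' t : ℝ} {f : V → ℝ} {z : V} (ht : 0 < t)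
    (hfin : ∀ r, (gBall G z r).Finite)
    (h : ENNReal.ofReal t ≤ Paper.maxEnergy G p f R' z) :
    ∃ r : ℝ, 0 < r ∧ r < R' ∧
      ENNReal.ofReal (t / 2) * ((gBall G z r).ncard : ℝ≥0∞) ≤
        Paper.pEnergy G p (gBall G z r) f := by
  have h2 : ENNReal.ofReal (t / 2) < Paper.maxEnergy G p f R' z :=
    lt_of_lt_of_le ((ENNReal.ofReal_lt_ofReal_iff ht).2 (by linarith)) h
  rw [Paper.maxEnergy] at h2
  rw [lt_iSup_iff] at h2
  obtain ⟨r, hr⟩ := h2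
  rw [lt_iSup_iff] at hr
  obtain ⟨hr0, hr2⟩ := hr
  rw [lt_iSup_iff] at hr2
  obtain ⟨hrR, hr3⟩ := hr2
  refine ⟨r, hr0, hrR, ?_⟩
  have hne : (gBall G z r).Nonempty := ⟨z, mem_gBall_self hr0⟩
  have hn0 : ((gBall G z r).ncard : ℝ≥0∞) ≠ 0 := by
    simp only [ne_eq, Nat.cast_eq_zero]
    exact fun hc => (Set.ncard_pos (hfin r)).2 hne |>.ne' hc
  have hnt : ((gBall G z r).ncard : ℝ≥0∞) ≠ ⊤ := ENNReal.natCast_ne_top _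
  exact le_of_lt ((ENNReal.lt_div_iff_mul_lt (Or.inl hn0) (Or.inl hnt)).1 hr3)

/-! ### Weak-type bound -/

lemma weaktype (G : SimpleGraph V) (hc : G.Connected) {CD : ℝ} (hD : Doubling G CD)
    (hCD : 1 ≤ CD) {p t : ℝ} (ht : 0 < t) (h : V → ℝ) (S : Finset V) (rad : V → ℝ)
    (A' : Set V) (hrad : ∀ z ∈ S, 0 < rad z)
    (hsub : ∀ z ∈ S, gBall G z (3 * rad z) ⊆ A')
    (hE : ∀ z ∈ S, ENNReal.ofReal (t / 2) * ((gBall G z (rad z)).ncard : ℝ≥0∞) ≤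
      Paper.pEnergy G p (gBall G z (rad z)) h) :
    ENNReal.ofReal (t / 2) * (S.card : ℝ≥0∞) ≤
      ENNReal.ofReal (CD ^ 2) * Paper.pEnergy G p A' h := by
  classical
  obtain ⟨T, hTS, hTdis, hTcov⟩ := vitali G hc rad S hrad
  -- card bound
  have hcard : (S.card : ℝ≥0∞) ≤ ∑ y ∈ T, ((gBall G y (3 * rad y)).ncard : ℝ≥0∞) := by
    have hsubF : S ⊆ T.biUnion (fun y => (hD.ball_finite y (3 * rad y)).toFinset) := by
      intro z hz
      obtain ⟨y, hyT, hmem⟩ := hTcov z hz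
      exact Finset.mem_biUnion.2 ⟨y, hyT, (Set.Finite.mem_toFinset _).2 hmem⟩
    have h1 : S.card ≤ ∑ y ∈ T, (gBall G y (3 * rad y)).ncard := by
      calc S.card ≤ (T.biUnion (fun y => (hD.ball_finite y (3 * rad y)).toFinset)).card :=
            Finset.card_le_card hsubF
        _ ≤ ∑ y ∈ T, ((hD.ball_finite y (3 * rad y)).toFinset).card := Finset.card_biUnion_le
        _ = ∑ y ∈ T, (gBall G y (3 * rad y)).ncard := by
            refine Finset.sum_congr rfl fun y _ => ?_
            exact (Set.ncard_eq_toFinset_card _ _).symm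
    exact_mod_cast Nat.cast_le.2 h1
  calc ENNReal.ofReal (t / 2) * (S.card : ℝ≥0∞)
      ≤ ∑ y ∈ T, ENNReal.ofReal (t / 2) * ((gBall G y (3 * rad y)).ncard : ℝ≥0∞) := by
        rw [← Finset.mul_sum]
        exact mul_le_mul' le_rfl hcard
    _ ≤ ∑ y ∈ T, ENNReal.ofReal (CD ^ 2) *
          (ENNReal.ofReal (t / 2) * ((gBall G y (rad y)).ncard : ℝ≥0∞)) := by
        refine Finset.sum_le_sum fun y hy => ?_
        have hcard3 : ((gBall G y (3 * rad y)).ncard : ℝ) ≤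
            CD ^ 2 * ((gBall G y (rad y)).ncard : ℝ) := hD.card3 hCD y (hrad y (hTS hy))
        have : ((gBall G y (3 * rad y)).ncard : ℝ≥0∞) ≤
            ENNReal.ofReal (CD ^ 2) * ((gBall G y (rad y)).ncard : ℝ≥0∞) := by
          rw [← ENNReal.ofReal_natCast, ← ENNReal.ofReal_natCast ((gBall G y (rad y)).ncard),
            ← ENNReal.ofReal_mul (by positivity)]
          exact ENNReal.ofReal_le_ofReal hcard3
        calc ENNReal.ofReal (t / 2) * ((gBall G y (3 * rad y)).ncard : ℝ≥0∞)
            ≤ ENNReal.ofReal (t / 2) *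
              (ENNReal.ofReal (CD ^ 2) * ((gBall G y (rad y)).ncard : ℝ≥0∞)) :=
              mul_le_mul' le_rfl this
          _ = ENNReal.ofReal (CD ^ 2) *
              (ENNReal.ofReal (t / 2) * ((gBall G y (rad y)).ncard : ℝ≥0∞)) := by ring
    _ ≤ ∑ y ∈ T, ENNReal.ofReal (CD ^ 2) * Paper.pEnergy G p (gBall G y (rad y)) h := by
        refine Finset.sum_le_sum fun y hy => mul_le_mul' le_rfl (hE y (hTS hy))
    _ = ENNReal.ofReal (CD ^ 2) * ∑ y ∈ T, Paper.pEnergy G p (gBall G y (rad y)) h := by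
        rw [Finset.mul_sum]
    _ ≤ ENNReal.ofReal (CD ^ 2) * Paper.pEnergy G p A' h := by
        refine mul_le_mul' le_rfl ?_
        refine pEnergy_sum_le G p T (fun y => gBall G y (rad y)) A' hTdis ?_ h
        intro y hyT
        exact (gBall_mono (by nlinarith [hrad y (hTS hyT)])).trans (hsub y (hTS hyT))

end S6

namespace S6
open Paper
open scoped ENNReal NNReal

variable {V : Type}

lemma tsum_set_eq_sum {B : Set V} (hB : B.Finite) (F : V → ℝ≥0∞) :
    ∑' z : B, F z = ∑ z ∈ hB.toFinset, F z := by
  rw [tsum_subtype]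
  have hind : B.indicator F = (↑hB.toFinset : Set V).indicator F := by
    rw [Set.Finite.coe_toFinset]
  rw [hind, ← tsum_subtype]
  exact Finset.tsum_subtype hB.toFinset F

lemma exists_median (B : Finset V) (hne : B.Nonempty) (f : V → ℝ) :
    ∃ a : ℝ, B.card ≤ 2 * (B.filter (fun z => a ≤ f z)).card ∧
             B.card ≤ 2 * (B.filter (fun z => f z ≤ a)).card := by
  classical
  set T := (B.image f).filter
    (fun t => B.card ≤ 2 * (B.filter (fun z => t ≤ f z)).card) with hT
  have hTne : T.Nonempty := by
    obtain ⟨t0, ht0, hmin⟩ := (B.image f).exists_min_image id (hne.image f)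
    refine ⟨t0, Finset.mem_filter.2 ⟨ht0, ?_⟩⟩
    have heq : B.filter (fun z => t0 ≤ f z) = B :=
      Finset.filter_true_of_mem (fun z hz => hmin (f z) (Finset.mem_image_of_mem f hz))
    rw [heq]; omega
  obtain ⟨a, haT, hamax⟩ := T.exists_max_image id hTne
  rw [hT, Finset.mem_filter] at haT
  refine ⟨a, haT.2, ?_⟩
  by_contra hcon
  push_neg at hcon
  have hsplit := Finset.card_filter_add_card_filter_not (s := B)
    (p := fun z => f z ≤ a)
  have heq2 : B.filter (fun z => ¬ f z ≤ a) = B.filter (fun z => a < f z) := by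
    apply Finset.filter_congr; intro z _; simp [not_le]
  rw [heq2] at hsplit
  have hcard0 : 0 < B.card := Finset.card_pos.2 hne
  have hnegne : (B.filter (fun z => a < f z)).Nonempty := Finset.card_pos.1 (by omega)
  obtain ⟨a', ha'mem, ha'min⟩ := (B.filter (fun z => a < f z)).exists_min_image f hnegne
  have hba : a < f a' := (Finset.mem_filter.1 ha'mem).2
  have hbT : f a' ∈ T := by
    refine Finset.mem_filter.2
      ⟨Finset.mem_image_of_mem f (Finset.mem_filter.1 ha'mem).1, ?_⟩
    have hsub2 : B.filter (fun z => a < f z) ⊆ B.filter (fun z => f a' ≤ f z) := by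
      intro z hz
      exact Finset.mem_filter.2 ⟨(Finset.mem_filter.1 hz).1, ha'min z hz⟩
    have hle2 := Finset.card_le_card hsub2
    omega
  have hfa := hamax (f a') hbT
  simp only [id] at hfa
  linarith

lemma add_rpow_le {u v q : ℝ} (hu : 0 ≤ u) (hv : 0 ≤ v) (hq : 0 ≤ q) :
    (u + v) ^ q ≤ 2 ^ q * (u ^ q + v ^ q) := by
  have h2 : (0:ℝ) ≤ 2 ^ q := Real.rpow_nonneg (by norm_num) q
  rcases le_total u v with h | h
  · calc (u + v) ^ q ≤ (2 * v) ^ q := Real.rpow_le_rpow (by linarith) (by linarith) hq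
      _ = 2 ^ q * v ^ q := Real.mul_rpow (by norm_num) hv
      _ ≤ 2 ^ q * (u ^ q + v ^ q) := by nlinarith [Real.rpow_nonneg hu q]
  · calc (u + v) ^ q ≤ (2 * u) ^ q := Real.rpow_le_rpow (by linarith) (by linarith) hq
      _ = 2 ^ q * u ^ q := Real.mul_rpow (by norm_num) hu
      _ ≤ 2 ^ q * (u ^ q + v ^ q) := by nlinarith [Real.rpow_nonneg hv q]

lemma powmean {p : ℝ} (hp : 1 ≤ p) (B : Finset V) (hne : B.Nonempty) (g : V → ℝ)
    (hg : ∀ z, 0 ≤ g z) :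
    ((∑ z ∈ B, g z) / (B.card : ℝ)) ^ p ≤ (∑ z ∈ B, g z ^ p) / (B.card : ℝ) := by
  have hn : (0:ℝ) < (B.card : ℝ) := by exact_mod_cast Finset.card_pos.2 hne
  have key := Real.rpow_arith_mean_le_arith_mean_rpow B (fun _ => 1 / (B.card : ℝ)) g
    (fun _ _ => by positivity)
    (by rw [Finset.sum_const, nsmul_eq_mul]; field_simp)
    (fun i _ => hg i) hp
  calc ((∑ z ∈ B, g z) / (B.card : ℝ)) ^ p
      = (∑ z ∈ B, 1 / (B.card : ℝ) * g z) ^ p := by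
        congr 1; rw [Finset.sum_div]; refine Finset.sum_congr rfl fun z _ => ?_; ring
    _ ≤ ∑ z ∈ B, 1 / (B.card : ℝ) * g z ^ p := key
    _ = (∑ z ∈ B, g z ^ p) / (B.card : ℝ) := by
        rw [Finset.sum_div]; refine Finset.sum_congr rfl fun z _ => ?_; ring

end S6

namespace S6
open Paper
open scoped ENNReal NNReal

variable {V : Type}

lemma oneside {G : SimpleGraph V} (hc : G.Connected) {CD CTP p β : ℝ}
    (hD : Doubling G CD) (hCD : 1 ≤ CD) (hp : 1 ≤ p) (hβ : 0 < β) (hCTP : 0 < CTP)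
    (hTP : Paper.TPineq G p β CTP) (x : V) (R : ℝ) (hR : 1 ≤ R) (g : V → ℝ)
    (hg : ∀ z, 0 ≤ g z)
    (hmed : (gBall G x R).ncard ≤ 2 * {z ∈ gBall G x R | g z = 0}.ncard) :
    (∑' z : gBall G x R, ENNReal.ofReal (g z ^ p)) ≤
      ENNReal.ofReal ((4:ℝ) ^ p * (8 * CTP * CD ^ 2 * (CTP + 1) ^ β) * R ^ β) *
        Paper.pEnergy G p (gBall G x ((3 * CTP + 4) * R)) g := by
  classical
  set B : Set V := gBall G x R with hB
  have hBfin : B.Finite := hD.ball_finite x R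
  have hRpos : 0 < R := by linarith
  have hxB : x ∈ B := mem_gBall_self hRpos
  set R' : ℝ := (CTP + 1) * R with hR'
  have hR'pos : 0 < R' := by nlinarith
  have hR'1 : 1 ≤ R' := by nlinarith
  set A' : Set V := gBall G x ((3 * CTP + 4) * R) with hA'
  set Z : Set V := {z ∈ B | g z = 0} with hZ
  have hR'βpos : 0 < R' ^ β := Real.rpow_pos_of_pos hR'pos β
  -- Claim A : the weak-type estimate at each truncation level
  have claimA : ∀ k : ℤ,
      ENNReal.ofReal (tk k ^ p) * ({z ∈ B | tk (k+1) ≤ g z}.ncard : ℝ≥0∞) ≤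
        ENNReal.ofReal ((8 * CTP * CD ^ 2 * (CTP + 1) ^ β) * R ^ β) *
          Paper.pEnergy G p A' (fun z => τ k (g z)) := by
    intro k
    set h : V → ℝ := fun z => τ k (g z) with hh
    set L : Set V := {z ∈ B | tk (k+1) ≤ g z} with hL
    have hLB : L ⊆ B := fun z hz => hz.1
    set wk : ℝ := tk k ^ p with hwk
    have hwkpos : 0 < wk := Real.rpow_pos_of_pos (tk_pos k) p
    set t : ℝ := wk / (2 * CTP * R' ^ β) with ht
    have htpos : 0 < t := by positivity
    set S : Set V := {z ∈ B | ENNReal.ofReal t ≤ Paper.maxEnergy G p h R' z} with hS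
    have hSfin : S.Finite := hBfin.subset (fun z hz => hz.1)
    have hRle : R ≤ CTP⁻¹ * R' := by
      rw [hR', inv_mul_eq_div, le_div_iff₀ hCTP]
      nlinarith
    have hball : B ⊆ gBall G x (CTP⁻¹ * R') := gBall_mono hRle
    have step0 : ∀ z ∈ L, ∀ y ∈ Z,
        ENNReal.ofReal t ≤ Paper.maxEnergy G p h R' z ∨
        ENNReal.ofReal t ≤ Paper.maxEnergy G p h R' y := by
      intro z hz y hy
      by_contra hcon
      push_neg at hcon
      obtain ⟨h1, h2⟩ := hcon
      have htp := hTP x R' hR'1 h z (hball hz.1) y (hball hy.1)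
      have hhz : h z = tk k := τ_of_ge hz.2
      have hhy : h y = 0 := τ_of_le (by rw [hy.2]; exact (tk_pos k).le)
      rw [hhz, hhy, sub_zero, abs_of_pos (tk_pos k)] at htp
      have hlt : Paper.maxEnergy G p h R' z + Paper.maxEnergy G p h R' y <
          ENNReal.ofReal t + ENNReal.ofReal t := ENNReal.add_lt_add h1 h2
      have hne0 : ENNReal.ofReal (CTP * R' ^ β) ≠ 0 := by
        simp only [ne_eq, ENNReal.ofReal_eq_zero, not_le]
        positivity
      have hmul := ENNReal.mul_lt_mul_right hne0 ENNReal.ofReal_ne_top hlt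
      have heq : ENNReal.ofReal (CTP * R' ^ β) * (ENNReal.ofReal t + ENNReal.ofReal t) =
          ENNReal.ofReal wk := by
        rw [← ENNReal.ofReal_add htpos.le htpos.le, ← ENNReal.ofReal_mul (by positivity)]
        congr 1
        rw [ht]
        field_simp
        ring
      rw [heq] at hmul
      exact absurd (lt_of_le_of_lt htp hmul) (lt_irrefl _)
    have step1 : L.ncard ≤ 2 * S.ncard := by
      by_cases hLS : L ⊆ S
      · have := Set.ncard_le_ncard hLS hSfin; omega
      · obtain ⟨z₀, hz₀L, hz₀S⟩ := Set.not_subset.1 hLS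
        have hz₀M : ¬ ENNReal.ofReal t ≤ Paper.maxEnergy G p h R' z₀ := by
          intro hcon; exact hz₀S ⟨hLB hz₀L, hcon⟩
        have hZS : Z ⊆ S := by
          intro y hy
          rcases step0 z₀ hz₀L y hy with h1 | h1
          · exact absurd h1 hz₀M
          · exact ⟨hy.1, h1⟩
        have h1 := Set.ncard_le_ncard hLB hBfin
        have h2 := Set.ncard_le_ncard hZS hSfin
        omega
    -- weak type via Vitali
    have hsel : ∀ z ∈ S, ∃ r : ℝ, 0 < r ∧ r < R' ∧
        ENNReal.ofReal (t/2) * ((gBall G z r).ncard : ℝ≥0∞) ≤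
          Paper.pEnergy G p (gBall G z r) h :=
      fun z hz => exists_radius htpos (fun r => hD.ball_finite z r) hz.2
    choose! rad hrad1 hrad2 hrad3 using hsel
    have hwt := weaktype G hc hD hCD htpos h hSfin.toFinset rad A'
      (fun z hz => hrad1 z (hSfin.mem_toFinset.1 hz))
      (fun z hz => by
        intro v hv
        have hzS : z ∈ S := hSfin.mem_toFinset.1 hz
        have hzB : z ∈ gBall G x R := hzS.1
        have hv2 : v ∈ gBall G x (R + 3 * rad z) := gBall_triangle hc hzB hv
        refine gBall_mono ?_ hv2
        have hr2 := hrad2 z hzS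
        nlinarith [hrad1 z hzS])
      (fun z hz => hrad3 z (hSfin.mem_toFinset.1 hz))
    rw [← Set.ncard_eq_toFinset_card S hSfin] at hwt
    -- combine
    have harith : 2 * wk = (8 * CTP * R' ^ β) * (t / 2) := by
      rw [ht]; field_simp; ring
    calc ENNReal.ofReal wk * (L.ncard : ℝ≥0∞)
        ≤ ENNReal.ofReal wk * (2 * (S.ncard : ℝ≥0∞)) := by
          refine mul_le_mul' le_rfl ?_
          have hcast : ((2 * S.ncard : ℕ) : ℝ≥0∞) = 2 * (S.ncard : ℝ≥0∞) := by push_cast; ring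
          rw [← hcast]
          exact Nat.cast_le.2 step1
      _ = ENNReal.ofReal (2 * wk) * (S.ncard : ℝ≥0∞) := by
          rw [ENNReal.ofReal_mul (by norm_num), ← mul_assoc, mul_comm (ENNReal.ofReal wk),
            ENNReal.ofReal_ofNat]
      _ = ENNReal.ofReal (8 * CTP * R' ^ β) * (ENNReal.ofReal (t / 2) * (S.ncard : ℝ≥0∞)) := by
          rw [harith, ENNReal.ofReal_mul (by positivity), mul_assoc]
      _ ≤ ENNReal.ofReal (8 * CTP * R' ^ β) *
            (ENNReal.ofReal (CD ^ 2) * Paper.pEnergy G p A' h) := mul_le_mul' le_rfl hwt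
      _ = ENNReal.ofReal ((8 * CTP * CD ^ 2 * (CTP + 1) ^ β) * R ^ β) *
            Paper.pEnergy G p A' h := by
          rw [← mul_assoc, ← ENNReal.ofReal_mul (by positivity)]
          congr 2
          rw [hR', Real.mul_rpow (by positivity) (by positivity)]
          ring
  -- Main computation
  rw [tsum_set_eq_sum hBfin (fun v => ENNReal.ofReal (g v ^ p))]
  set BF := hBfin.toFinset with hBF
  set kz : V → ℤ := fun z => ⌊Real.logb 2 (g z)⌋ - 1 with hkz
  have hlevel : ∀ z : V, 0 < g z → tk (kz z + 1) ≤ g z ∧ g z ≤ tk (kz z + 2) := by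
    intro z hz
    have h1 : tk (kz z + 1) = (2:ℝ) ^ ((⌊Real.logb 2 (g z)⌋ : ℝ)) := by
      rw [tk, ← Real.rpow_intCast]
      congr 1
      push_cast [hkz]
      ring
    have h2 : tk (kz z + 2) = (2:ℝ) ^ ((⌊Real.logb 2 (g z)⌋ : ℝ) + 1) := by
      rw [tk, ← Real.rpow_intCast]
      congr 1
      push_cast [hkz]
      ring
    have hlog : (2:ℝ) ^ (Real.logb 2 (g z)) = g z :=
      Real.rpow_logb (by norm_num) (by norm_num) hz
    constructor
    · calc tk (kz z + 1) = (2:ℝ) ^ ((⌊Real.logb 2 (g z)⌋ : ℝ)) := h1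
        _ ≤ (2:ℝ) ^ (Real.logb 2 (g z)) :=
            Real.rpow_le_rpow_of_exponent_le (by norm_num) (Int.floor_le _)
        _ = g z := hlog
    · calc g z = (2:ℝ) ^ (Real.logb 2 (g z)) := hlog.symm
        _ ≤ (2:ℝ) ^ ((⌊Real.logb 2 (g z)⌋ : ℝ) + 1) :=
            Real.rpow_le_rpow_of_exponent_le (by norm_num) (le_of_lt (Int.lt_floor_add_one _))
        _ = tk (kz z + 2) := h2.symm
  set BF' := BF.filter (fun z => 0 < g z) with hBF'
  have hzero : ∀ z ∈ BF, z ∉ BF' → ENNReal.ofReal (g z ^ p) = 0 := by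
    intro z hz hz'
    have hz0 : g z = 0 := by
      rcases (hg z).eq_or_lt with h' | h'
      · exact h'.symm
      · exact absurd (Finset.mem_filter.2 ⟨hz, h'⟩) hz'
    rw [hz0, Real.zero_rpow (by linarith), ENNReal.ofReal_zero]
  have hsum1 : ∑ z ∈ BF, ENNReal.ofReal (g z ^ p) = ∑ z ∈ BF', ENNReal.ofReal (g z ^ p) :=
    (Finset.sum_subset (Finset.filter_subset _ _) hzero).symm
  have hsum2 : ∑ z ∈ BF', ENNReal.ofReal (g z ^ p) ≤
      ∑ z ∈ BF', ENNReal.ofReal ((4:ℝ) ^ p) * ENNReal.ofReal (tk (kz z) ^ p) := by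
    refine Finset.sum_le_sum fun z hz => ?_
    have hzpos : 0 < g z := (Finset.mem_filter.1 hz).2
    have hlev := hlevel z hzpos
    have h4 : tk (kz z + 2) = 4 * tk (kz z) := by
      rw [show kz z + 2 = kz z + 1 + 1 by ring, tk_succ, tk_succ]; ring
    calc ENNReal.ofReal (g z ^ p) ≤ ENNReal.ofReal ((4 * tk (kz z)) ^ p) := by
          refine ENNReal.ofReal_le_ofReal (Real.rpow_le_rpow (hg z) ?_ (by linarith))
          rw [← h4]; exact hlev.2
      _ = ENNReal.ofReal ((4:ℝ) ^ p) * ENNReal.ofReal (tk (kz z) ^ p) := by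
          rw [Real.mul_rpow (by norm_num) (tk_pos _).le,
            ENNReal.ofReal_mul (Real.rpow_nonneg (by norm_num) p)]
  have hfib : ∑ z ∈ BF', ENNReal.ofReal (tk (kz z) ^ p) =
      ∑ m ∈ BF'.image kz, ∑ z ∈ BF'.filter (fun z => kz z = m),
        ENNReal.ofReal (tk (kz z) ^ p) :=
    (Finset.sum_fiberwise_of_maps_to (fun z hz => Finset.mem_image_of_mem kz hz) _).symm
  have hLfin : ∀ m : ℤ, ({z ∈ B | tk (m+1) ≤ g z}).Finite :=
    fun m => hBfin.subset (fun z hz => hz.1)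
  have hfib2 : ∀ m : ℤ,
      ∑ z ∈ BF'.filter (fun z => kz z = m), ENNReal.ofReal (tk (kz z) ^ p) ≤
        ENNReal.ofReal (tk m ^ p) * (({z ∈ B | tk (m+1) ≤ g z}).ncard : ℝ≥0∞) := by
    intro m
    have hconst : ∑ z ∈ BF'.filter (fun z => kz z = m), ENNReal.ofReal (tk (kz z) ^ p) =
        (BF'.filter (fun z => kz z = m)).card • ENNReal.ofReal (tk m ^ p) := by
      rw [← Finset.sum_const]
      refine Finset.sum_congr rfl fun z hz => ?_
      rw [(Finset.mem_filter.1 hz).2]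
    rw [hconst, nsmul_eq_mul, mul_comm]
    refine mul_le_mul' le_rfl ?_
    refine Nat.cast_le.2 ?_
    rw [Set.ncard_eq_toFinset_card _ (hLfin m)]
    refine Finset.card_le_card ?_
    intro z hz
    have hz1 := Finset.mem_filter.1 hz
    have hz2 := Finset.mem_filter.1 hz1.1
    rw [Set.Finite.mem_toFinset]
    refine ⟨hBfin.mem_toFinset.1 hz2.1, ?_⟩
    rw [← hz1.2]
    exact (hlevel z hz2.2).1
  calc ∑ z ∈ BF, ENNReal.ofReal (g z ^ p)
      = ∑ z ∈ BF', ENNReal.ofReal (g z ^ p) := hsum1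
    _ ≤ ∑ z ∈ BF', ENNReal.ofReal ((4:ℝ) ^ p) * ENNReal.ofReal (tk (kz z) ^ p) := hsum2
    _ = ENNReal.ofReal ((4:ℝ) ^ p) * ∑ z ∈ BF', ENNReal.ofReal (tk (kz z) ^ p) := by
        rw [Finset.mul_sum]
    _ ≤ ENNReal.ofReal ((4:ℝ) ^ p) * (ENNReal.ofReal ((8 * CTP * CD ^ 2 * (CTP + 1) ^ β) * R ^ β) *
          ∑' k : ℤ, Paper.pEnergy G p A' (fun z => τ k (g z))) := by
        refine mul_le_mul' le_rfl ?_
        rw [hfib]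
        calc ∑ m ∈ BF'.image kz, ∑ z ∈ BF'.filter (fun z => kz z = m),
              ENNReal.ofReal (tk (kz z) ^ p)
            ≤ ∑ m ∈ BF'.image kz, ENNReal.ofReal ((8 * CTP * CD ^ 2 * (CTP + 1) ^ β) * R ^ β) *
                Paper.pEnergy G p A' (fun z => τ m (g z)) := by
              refine Finset.sum_le_sum fun m _ => ?_
              exact le_trans (hfib2 m) (claimA m)
          _ = ENNReal.ofReal ((8 * CTP * CD ^ 2 * (CTP + 1) ^ β) * R ^ β) *
                ∑ m ∈ BF'.image kz, Paper.pEnergy G p A' (fun z => τ m (g z)) := by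
              rw [Finset.mul_sum]
          _ ≤ ENNReal.ofReal ((8 * CTP * CD ^ 2 * (CTP + 1) ^ β) * R ^ β) *
                ∑' k : ℤ, Paper.pEnergy G p A' (fun z => τ k (g z)) :=
              mul_le_mul' le_rfl (ENNReal.sum_le_tsum _)
    _ ≤ ENNReal.ofReal ((4:ℝ) ^ p) * (ENNReal.ofReal ((8 * CTP * CD ^ 2 * (CTP + 1) ^ β) * R ^ β) *
          Paper.pEnergy G p A' g) :=
        mul_le_mul' le_rfl (mul_le_mul' le_rfl (pEnergy_tsum_trunc_le G hp A' g))
    _ = ENNReal.ofReal ((4:ℝ) ^ p * (8 * CTP * CD ^ 2 * (CTP + 1) ^ β) * R ^ β) *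
          Paper.pEnergy G p A' g := by
        rw [← mul_assoc, ← ENNReal.ofReal_mul (Real.rpow_nonneg (by norm_num) p), ← mul_assoc]

end S6

namespace S6
open Paper
open scoped ENNReal NNReal

variable {V : Type}

lemma medianEst {G : SimpleGraph V} (hc : G.Connected) {CD CTP p β : ℝ}
    (hD : Doubling G CD) (hCD : 1 ≤ CD) (hp : 1 ≤ p) (hβ : 0 < β) (hCTP : 0 < CTP)
    (hTP : Paper.TPineq G p β CTP) (x : V) (R : ℝ) (hR : 1 ≤ R) (f : V → ℝ) (a : ℝ)
    (hmed1 : (gBall G x R).ncard ≤ 2 * {z ∈ gBall G x R | a ≤ f z}.ncard)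
    (hmed2 : (gBall G x R).ncard ≤ 2 * {z ∈ gBall G x R | f z ≤ a}.ncard) :
    (∑' z : gBall G x R, ENNReal.ofReal (|f z - a| ^ p)) ≤
      ENNReal.ofReal ((2 * ((4:ℝ) ^ p * (8 * CTP * CD ^ 2 * (CTP + 1) ^ β))) * R ^ β) *
        Paper.pEnergy G p (gBall G x ((3 * CTP + 4) * R)) f := by
  classical
  set gp : V → ℝ := fun z => max (f z - a) 0 with hgp
  set gm : V → ℝ := fun z => max (a - f z) 0 with hgm
  have hgp0 : ∀ z, 0 ≤ gp z := fun z => le_max_right _ _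
  have hgm0 : ∀ z, 0 ≤ gm z := fun z => le_max_right _ _
  have hp0 : (0:ℝ) < p := by linarith
  have hsplit : ∀ z : V, ENNReal.ofReal (|f z - a| ^ p)
      = ENNReal.ofReal (gp z ^ p) + ENNReal.ofReal (gm z ^ p) := by
    intro z
    rcases le_total (f z) a with h | h
    · have h1 : gp z = 0 := by rw [hgp]; simp only [max_eq_right_iff]; linarith
      have h2 : gm z = a - f z := by rw [hgm]; simp only [max_eq_left_iff]; linarith
      rw [h1, h2, Real.zero_rpow hp0.ne', ENNReal.ofReal_zero, zero_add,
        abs_of_nonpos (by linarith : f z - a ≤ 0), show -(f z - a) = a - f z by ring]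
    · have h1 : gm z = 0 := by rw [hgm]; simp only [max_eq_right_iff]; linarith
      have h2 : gp z = f z - a := by rw [hgp]; simp only [max_eq_left_iff]; linarith
      rw [h1, h2, Real.zero_rpow hp0.ne', ENNReal.ofReal_zero, add_zero,
        abs_of_nonneg (by linarith : (0:ℝ) ≤ f z - a)]
  have hz1 : {z ∈ gBall G x R | gp z = 0} = {z ∈ gBall G x R | f z ≤ a} := by
    ext z
    simp only [Set.mem_setOf_eq, hgp, max_eq_right_iff, sub_nonpos, and_congr_right_iff]
  have hz2 : {z ∈ gBall G x R | gm z = 0} = {z ∈ gBall G x R | a ≤ f z} := by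
    ext z
    simp only [Set.mem_setOf_eq, hgm, max_eq_right_iff, sub_nonpos, and_congr_right_iff]
  have hlip1 : ∀ u v : V, |gp u - gp v| ≤ |f u - f v| := by
    intro u v
    have h := abs_max_sub_max_le_abs (f u - a) (f v - a) 0
    simpa using h
  have hlip2 : ∀ u v : V, |gm u - gm v| ≤ |f u - f v| := by
    intro u v
    have h := abs_max_sub_max_le_abs (a - f u) (a - f v) 0
    have h2 : a - f u - (a - f v) = -(f u - f v) := by ring
    rw [h2, abs_neg] at h
    simpa using h
  have hone1 := oneside hc hD hCD hp hβ hCTP hTP x R hR gp hgp0 (by rw [hz1]; exact hmed2)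
  have hone2 := oneside hc hD hCD hp hβ hCTP hTP x R hR gm hgm0 (by rw [hz2]; exact hmed1)
  have hEp := pEnergy_compare G (le_trans zero_le_one hp) (gBall G x ((3 * CTP + 4) * R)) hlip1
  have hEm := pEnergy_compare G (le_trans zero_le_one hp) (gBall G x ((3 * CTP + 4) * R)) hlip2
  calc ∑' z : gBall G x R, ENNReal.ofReal (|f z - a| ^ p)
      = (∑' z : gBall G x R, ENNReal.ofReal (gp z ^ p)) +
        (∑' z : gBall G x R, ENNReal.ofReal (gm z ^ p)) := by
        rw [← ENNReal.tsum_add]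
        exact tsum_congr fun z => hsplit z
    _ ≤ ENNReal.ofReal ((4:ℝ) ^ p * (8 * CTP * CD ^ 2 * (CTP + 1) ^ β) * R ^ β) *
          Paper.pEnergy G p (gBall G x ((3 * CTP + 4) * R)) f +
        ENNReal.ofReal ((4:ℝ) ^ p * (8 * CTP * CD ^ 2 * (CTP + 1) ^ β) * R ^ β) *
          Paper.pEnergy G p (gBall G x ((3 * CTP + 4) * R)) f :=
        add_le_add (hone1.trans (mul_le_mul' le_rfl hEp)) (hone2.trans (mul_le_mul' le_rfl hEm))
    _ = ENNReal.ofReal ((2 * ((4:ℝ) ^ p * (8 * CTP * CD ^ 2 * (CTP + 1) ^ β))) * R ^ β) *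
          Paper.pEnergy G p (gBall G x ((3 * CTP + 4) * R)) f := by
        rw [← two_mul, ← mul_assoc, show (2:ℝ≥0∞) = ENNReal.ofReal 2 from
          (ENNReal.ofReal_ofNat 2).symm, ← ENNReal.ofReal_mul (by norm_num)]
        congr 2
        ring

end S6


/-- Lemma `lem.TP-PI`: two-point estimate implies Poincaré inequality.
Let `p ∈ [1,∞)`, `β > 0`. Assume `deg(G) < ∞`, the counting measure is volume doubling
with constant `CD`, and `G` satisfies `TP_p(β)` with constant `CTP`. Then there are
`C, A > 0` depending only on `p, CD`, the degree bound and `CTP` such that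
`Σ_{z∈B(x,R)} |f(z)-a|^p ≤ C·R^β·𝔈_{p,B(x,AR)}(f)` for every `x`, `R ≥ 1`, `f` and
every median `a` of `f` on `B(x,R)`. In particular `G` satisfies `PI_p(β)`. -/
theorem statement6 (p β CD CTP : ℝ) (hp : 1 ≤ p) (hβ : 0 < β) (hCD : 1 ≤ CD)
    (hCTP : 0 < CTP) (D : ℕ) :
    ∃ C : ℝ, 0 < C ∧ ∃ A : ℝ, 0 < A ∧ ∃ CPI : ℝ, 1 ≤ CPI ∧ ∃ API : ℝ, 1 ≤ API ∧
      ∀ (V : Type) (G : SimpleGraph V),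
        G.Connected → Paper.DegLE G D →
        (∀ (x : V) (r : ℝ), 0 < r → (Paper.gBall G x (2 * r)).Finite ∧
          ((Paper.gBall G x (2 * r)).ncard : ℝ) ≤ CD * ((Paper.gBall G x r).ncard : ℝ)) →
        Paper.TPineq G p β CTP →
        (∀ (x : V) (R : ℝ), 1 ≤ R → ∀ f : V → ℝ, ∀ a : ℝ,
          (Paper.gBall G x R).ncard ≤ 2 * {z ∈ Paper.gBall G x R | a ≤ f z}.ncard →
          (Paper.gBall G x R).ncard ≤ 2 * {z ∈ Paper.gBall G x R | f z ≤ a}.ncard →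
          (∑' z : Paper.gBall G x R, ENNReal.ofReal (|f z - a| ^ p)) ≤
            ENNReal.ofReal (C * R ^ β) * Paper.pEnergy G p (Paper.gBall G x (A * R)) f) ∧
        Paper.PIineq G p β CPI API := by
  classical
  have hCTP1 : (0:ℝ) < CTP + 1 := by linarith
  refine ⟨2 * ((4:ℝ) ^ p * (8 * CTP * CD ^ 2 * (CTP + 1) ^ β)), by positivity,
    3 * CTP + 4, by linarith,
    max 1 ((2:ℝ) ^ p * 2 * (2 * ((4:ℝ) ^ p * (8 * CTP * CD ^ 2 * (CTP + 1) ^ β)))),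
    le_max_left _ _,
    3 * CTP + 4, by linarith, ?_⟩
  intro V G hc hDeg hD hTP
  constructor
  · exact fun x R hR f a h1 h2 => S6.medianEst hc hD hCD hp hβ hCTP hTP x R hR f a h1 h2
  · intro x R hR f
    set C₀ : ℝ := 2 * ((4:ℝ) ^ p * (8 * CTP * CD ^ 2 * (CTP + 1) ^ β)) with hC₀
    have hC₀pos : 0 < C₀ := by rw [hC₀]; positivity
    have hRpos : (0:ℝ) < R := by linarith
    have hDD : S6.Doubling G CD := hD
    have hBfin : (Paper.gBall G x R).Finite := hDD.ball_finite x R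
    have hxB : x ∈ Paper.gBall G x R := S6.mem_gBall_self hRpos
    set BF := hBfin.toFinset with hBF
    have hBFne : BF.Nonempty := ⟨x, hBfin.mem_toFinset.2 hxB⟩
    have hn : (0:ℝ) < (BF.card : ℝ) := by exact_mod_cast Finset.card_pos.2 hBFne
    obtain ⟨a, ha1, ha2⟩ := S6.exists_median BF hBFne f
    have hc1 : (Paper.gBall G x R).ncard ≤ 2 * {z ∈ Paper.gBall G x R | a ≤ f z}.ncard := by
      have hset : {z ∈ Paper.gBall G x R | a ≤ f z} =
          ↑(BF.filter (fun z => a ≤ f z)) := by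
        ext z
        simp [hBF, hBfin.mem_toFinset]
      rw [hset, Set.ncard_coe_finset, Set.ncard_eq_toFinset_card _ hBfin]
      exact ha1
    have hc2 : (Paper.gBall G x R).ncard ≤ 2 * {z ∈ Paper.gBall G x R | f z ≤ a}.ncard := by
      have hset : {z ∈ Paper.gBall G x R | f z ≤ a} =
          ↑(BF.filter (fun z => f z ≤ a)) := by
        ext z
        simp [hBF, hBfin.mem_toFinset]
      rw [hset, Set.ncard_coe_finset, Set.ncard_eq_toFinset_card _ hBfin]
      exact ha2
    have key := S6.medianEst hc hDD hCD hp hβ hCTP hTP x R hR f a hc1 hc2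
    rw [← hC₀] at key
    -- the average
    have hcard : ((Paper.gBall G x R).ncard : ℝ) = (BF.card : ℝ) := by
      rw [Set.ncard_eq_toFinset_card _ hBfin]
    have hsumf : ∑ᶠ y ∈ Paper.gBall G x R, f y = ∑ z ∈ BF, f z := by
      rw [← hBfin.coe_toFinset, finsum_mem_coe_finset]
    have havg0 : Paper.ballAvg G x R f = (∑ z ∈ BF, f z) / (BF.card : ℝ) := by
      rw [Paper.ballAvg, hsumf, hcard]
    have hdiff : a - Paper.ballAvg G x R f = (∑ z ∈ BF, (a - f z)) / (BF.card : ℝ) := by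
      rw [havg0, Finset.sum_sub_distrib, Finset.sum_const, nsmul_eq_mul, mul_comm]
      field_simp
    have hnum : |∑ z ∈ BF, (a - f z)| ≤ ∑ z ∈ BF, |f z - a| :=
      (Finset.abs_sum_le_sum_abs _ _).trans
        (le_of_eq (Finset.sum_congr rfl fun z _ => abs_sub_comm a (f z)))
    have habs1 : |a - Paper.ballAvg G x R f| ≤ (∑ z ∈ BF, |f z - a|) / (BF.card : ℝ) := by
      rw [hdiff, abs_div, abs_of_pos hn]
      exact (div_le_div_iff_of_pos_right hn).2 hnum
    have hpow : |a - Paper.ballAvg G x R f| ^ p * (BF.card : ℝ) ≤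
        ∑ z ∈ BF, |f z - a| ^ p := by
      have h2 : |a - Paper.ballAvg G x R f| ^ p ≤
          ((∑ z ∈ BF, |f z - a|) / (BF.card : ℝ)) ^ p :=
        Real.rpow_le_rpow (abs_nonneg _) habs1 (by linarith)
      have h3 := S6.powmean hp BF hBFne (fun z => |f z - a|) (fun z => abs_nonneg _)
      have h4 : |a - Paper.ballAvg G x R f| ^ p ≤
          (∑ z ∈ BF, |f z - a| ^ p) / (BF.card : ℝ) := h2.trans h3
      calc |a - Paper.ballAvg G x R f| ^ p * (BF.card : ℝ)
          ≤ ((∑ z ∈ BF, |f z - a| ^ p) / (BF.card : ℝ)) * (BF.card : ℝ) :=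
            mul_le_mul_of_nonneg_right h4 hn.le
        _ = ∑ z ∈ BF, |f z - a| ^ p := div_mul_cancel₀ _ hn.ne'
    have hXa : (∑' z : Paper.gBall G x R,
          ENNReal.ofReal (|a - Paper.ballAvg G x R f| ^ p)) ≤
        ∑' z : Paper.gBall G x R, ENNReal.ofReal (|f z - a| ^ p) := by
      rw [S6.tsum_set_eq_sum hBfin (fun _ => ENNReal.ofReal (|a - Paper.ballAvg G x R f| ^ p)),
        S6.tsum_set_eq_sum hBfin (fun v => ENNReal.ofReal (|f v - a| ^ p))]
      rw [Finset.sum_const, nsmul_eq_mul,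
        show ((BF.card : ℝ≥0∞)) = ENNReal.ofReal (BF.card : ℝ) from
          (ENNReal.ofReal_natCast _).symm,
        ← ENNReal.ofReal_mul (Nat.cast_nonneg _)]
      calc ENNReal.ofReal ((BF.card : ℝ) * |a - Paper.ballAvg G x R f| ^ p)
          ≤ ENNReal.ofReal (∑ z ∈ BF, |f z - a| ^ p) := by
            refine ENNReal.ofReal_le_ofReal ?_
            rw [mul_comm]
            exact hpow
        _ = ∑ z ∈ BF, ENNReal.ofReal (|f z - a| ^ p) :=
            ENNReal.ofReal_sum_of_nonneg fun z _ => Real.rpow_nonneg (abs_nonneg _) p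
    have h2p : (0:ℝ) ≤ (2:ℝ) ^ p := Real.rpow_nonneg (by norm_num) p
    calc ∑' y : Paper.gBall G x R, ENNReal.ofReal (|f y - Paper.ballAvg G x R f| ^ p)
        ≤ ∑' y : Paper.gBall G x R, (ENNReal.ofReal ((2:ℝ) ^ p) *
            (ENNReal.ofReal (|f y - a| ^ p) +
             ENNReal.ofReal (|a - Paper.ballAvg G x R f| ^ p))) := by
          refine ENNReal.tsum_le_tsum fun y => ?_
          have h6 : |f ↑y - Paper.ballAvg G x R f| ≤ |f ↑y - a| + |a - Paper.ballAvg G x R f| := by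
            have h7 : f ↑y - Paper.ballAvg G x R f = (f ↑y - a) + (a - Paper.ballAvg G x R f) := by
              ring
            rw [h7]
            exact abs_add_le _ _
          have h5 : |f ↑y - Paper.ballAvg G x R f| ^ p ≤
              (2:ℝ) ^ p * (|f ↑y - a| ^ p + |a - Paper.ballAvg G x R f| ^ p) := by
            calc |f ↑y - Paper.ballAvg G x R f| ^ p
                ≤ (|f ↑y - a| + |a - Paper.ballAvg G x R f|) ^ p :=
                  Real.rpow_le_rpow (abs_nonneg _) h6 (by linarith)
              _ ≤ (2:ℝ) ^ p * (|f ↑y - a| ^ p + |a - Paper.ballAvg G x R f| ^ p) :=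
                  S6.add_rpow_le (abs_nonneg _) (abs_nonneg _) (by linarith)
          calc ENNReal.ofReal (|f ↑y - Paper.ballAvg G x R f| ^ p)
              ≤ ENNReal.ofReal ((2:ℝ) ^ p *
                  (|f ↑y - a| ^ p + |a - Paper.ballAvg G x R f| ^ p)) :=
                ENNReal.ofReal_le_ofReal h5
            _ = ENNReal.ofReal ((2:ℝ) ^ p) * (ENNReal.ofReal (|f ↑y - a| ^ p) +
                  ENNReal.ofReal (|a - Paper.ballAvg G x R f| ^ p)) := by
                rw [ENNReal.ofReal_mul h2p, ENNReal.ofReal_add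
                  (Real.rpow_nonneg (abs_nonneg _) p) (Real.rpow_nonneg (abs_nonneg _) p)]
      _ = ENNReal.ofReal ((2:ℝ) ^ p) *
            ((∑' y : Paper.gBall G x R, ENNReal.ofReal (|f y - a| ^ p)) +
             (∑' y : Paper.gBall G x R,
                ENNReal.ofReal (|a - Paper.ballAvg G x R f| ^ p))) := by
          rw [ENNReal.tsum_mul_left, ENNReal.tsum_add]
      _ ≤ ENNReal.ofReal ((2:ℝ) ^ p) *
            ((∑' y : Paper.gBall G x R, ENNReal.ofReal (|f y - a| ^ p)) +
             (∑' y : Paper.gBall G x R, ENNReal.ofReal (|f y - a| ^ p))) :=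
          mul_le_mul' le_rfl (add_le_add le_rfl hXa)
      _ = ENNReal.ofReal ((2:ℝ) ^ p * 2) *
            (∑' y : Paper.gBall G x R, ENNReal.ofReal (|f y - a| ^ p)) := by
          rw [← two_mul, ENNReal.ofReal_mul h2p, show ((2:ℝ≥0∞)) = ENNReal.ofReal 2 from
            (ENNReal.ofReal_ofNat 2).symm]
          ring
      _ ≤ ENNReal.ofReal ((2:ℝ) ^ p * 2) * (ENNReal.ofReal (C₀ * R ^ β) *
            Paper.pEnergy G p (Paper.gBall G x ((3 * CTP + 4) * R)) f) :=
          mul_le_mul' le_rfl key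
      _ ≤ ENNReal.ofReal (max 1 ((2:ℝ) ^ p * 2 * C₀) * R ^ β) *
            Paper.pEnergy G p (Paper.gBall G x ((3 * CTP + 4) * R)) f := by
          rw [← mul_assoc, ← ENNReal.ofReal_mul (by positivity)]
          refine mul_le_mul' (ENNReal.ofReal_le_ofReal ?_) le_rfl
          rw [← mul_assoc]
          refine mul_le_mul_of_nonneg_right (le_max_right _ _) ?_
          positivity
end

section
/- Let p ∈ (1,∞), d_f ≥ 1 and β > 0, and assume G satisfies AR(d_f) and cap_{p,≤}(β). Then for every δ ∈ (0,1) there exists C(δ) > 0, depending only on δ, p, d_f, β and the constants in AR(d_f) and cap_{p,≤}(β), such that cap_p^G(B(x,δR), V ∖ B(x,R)) ≤ C(δ)·#B(x,δR)/R^β for all x ∈ V and all R ≥ δ⁻¹. -/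
open scoped ENNReal NNReal

namespace Cap10
open Paper

variable {V : Type*}

lemma pCap_le (G : SimpleGraph V) (p : ℝ) (A₀ A₁ A₂ : Set V) (f : V → ℝ)
    (h0 : ∀ x ∈ A₀, f x = 0) (h1 : ∀ x ∈ A₁, f x = 1) :
    Paper.pCap G p A₀ A₁ A₂ ≤ Paper.pEnergy G p A₂ f :=
  le_trans (iInf_le _ f) (le_trans (iInf_le _ h0) (iInf_le _ h1))

lemma exists_lt (G : SimpleGraph V) (p : ℝ) (A₀ A₁ A₂ : Set V) (c : ℝ≥0∞)
    (h : Paper.pCap G p A₀ A₁ A₂ < c) :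
    ∃ f : V → ℝ, (∀ v ∈ A₀, f v = 0) ∧ (∀ v ∈ A₁, f v = 1) ∧ Paper.pEnergy G p A₂ f < c := by
  unfold Paper.pCap at h
  rw [iInf_lt_iff] at h; obtain ⟨f, h⟩ := h
  rw [iInf_lt_iff] at h; obtain ⟨h0, h⟩ := h
  rw [iInf_lt_iff] at h; obtain ⟨h1, h⟩ := h
  exact ⟨f, h0, h1, h⟩

lemma pEnergy_mono (G : SimpleGraph V) {p : ℝ} (hp : 0 < p) (A : Set V) (f g : V → ℝ)
    (h : ∀ u v : V, G.Adj u v → |f u - f v| ≤ |g u - g v|) :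
    Paper.pEnergy G p A f ≤ Paper.pEnergy G p A g := by
  refine ENNReal.div_le_div_right (ENNReal.tsum_le_tsum fun e => ?_) 2
  exact ENNReal.ofReal_le_ofReal (Real.rpow_le_rpow (abs_nonneg _) (h _ _ e.2.1) hp.le)

lemma pEnergy_zero (G : SimpleGraph V) {p : ℝ} (hp : p ≠ 0) (A : Set V) :
    Paper.pEnergy G p A (fun _ => 0) = 0 := by
  unfold Paper.pEnergy
  simp [Real.zero_rpow hp]

noncomputable def clamp (f : V → ℝ) : V → ℝ := fun v => max (min (f v) 1) 0

lemma clamp_nonneg (f : V → ℝ) (v : V) : 0 ≤ clamp f v := le_max_right _ _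

lemma clamp_of_eq_zero {f : V → ℝ} {v : V} (h : f v = 0) : clamp f v = 0 := by
  simp [clamp, h]

lemma clamp_of_eq_one {f : V → ℝ} {v : V} (h : f v = 1) : clamp f v = 1 := by
  simp [clamp, h]

lemma clamp_lip (f : V → ℝ) (u v : V) : |clamp f u - clamp f v| ≤ |f u - f v| := by
  refine le_trans (abs_max_sub_max_le_abs _ _ _) ?_
  refine le_trans (abs_min_sub_min_le_max _ _ _ _) ?_
  simp

lemma exists_abs_inf'_sub_le {ι : Type*} (s : Finset ι) (hs : s.Nonempty) (f g : ι → ℝ) :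
    ∃ i ∈ s, |s.inf' hs f - s.inf' hs g| ≤ |f i - g i| := by
  obtain ⟨i, hi, hfi⟩ := s.exists_mem_eq_inf' hs f
  obtain ⟨j, hj, hgj⟩ := s.exists_mem_eq_inf' hs g
  rcases le_total (s.inf' hs f) (s.inf' hs g) with h | h
  · refine ⟨i, hi, ?_⟩
    rw [abs_of_nonpos (by linarith)]
    have h1 : s.inf' hs g ≤ g i := Finset.inf'_le _ hi
    rw [hfi] at h ⊢
    linarith [neg_abs_le (f i - g i)]
  · refine ⟨j, hj, ?_⟩
    rw [abs_of_nonneg (by linarith)]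
    have h1 : s.inf' hs f ≤ f j := Finset.inf'_le _ hj
    rw [hgj] at h ⊢
    linarith [le_abs_self (f j - g j)]

lemma pEnergy_inf' {ι : Type*} (G : SimpleGraph V) {p : ℝ} (hp : 0 < p)
    (s : Finset ι) (hs : s.Nonempty) (F : ι → V → ℝ) :
    Paper.pEnergy G p Set.univ (fun v => s.inf' hs fun i => F i v) ≤
      ∑ i ∈ s, Paper.pEnergy G p Set.univ (F i) := by
  unfold Paper.pEnergy
  simp only [div_eq_mul_inv]
  rw [← Finset.sum_mul]
  refine mul_le_mul_of_nonneg_right ?_ (by positivity)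
  rw [← Summable.tsum_finsetSum (fun i _ => ENNReal.summable)]
  refine ENNReal.tsum_le_tsum fun e => ?_
  obtain ⟨i, hi, hle⟩ := exists_abs_inf'_sub_le s hs (fun i => F i e.1.1) (fun i => F i e.1.2)
  calc ENNReal.ofReal (|s.inf' hs (fun i => F i e.1.1) - s.inf' hs (fun i => F i e.1.2)| ^ p)
      ≤ ENNReal.ofReal (|F i e.1.1 - F i e.1.2| ^ p) :=
        ENNReal.ofReal_le_ofReal (Real.rpow_le_rpow (abs_nonneg _) hle hp.le)
    _ ≤ ∑ j ∈ s, ENNReal.ofReal (|F j e.1.1 - F j e.1.2| ^ p) :=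
        Finset.single_le_sum (f := fun j => ENNReal.ofReal (|F j e.1.1 - F j e.1.2| ^ p))
          (fun _ _ => zero_le) hi

lemma tsum_le_card {α : Type*} {P : α → Prop} (T : Finset α) (g : {a : α // P a} → ℝ≥0∞)
    (hle : ∀ a, g a ≤ 1) (hsupp : ∀ a, g a ≠ 0 → a.val ∈ T) :
    ∑' a, g a ≤ (T.card : ℝ≥0∞) := by
  classical
  rw [ENNReal.tsum_eq_iSup_sum]
  refine iSup_le fun F => ?_
  calc ∑ a ∈ F, g a = ∑ a ∈ F.filter (fun a => a.val ∈ T), g a :=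
        (Finset.sum_filter_of_ne fun a _ h => hsupp a h).symm
    _ ≤ ∑ a ∈ F.filter (fun a => a.val ∈ T), 1 := Finset.sum_le_sum fun a _ => hle a
    _ = ((F.filter fun a => a.val ∈ T).card : ℝ≥0∞) := by simp
    _ ≤ (T.card : ℝ≥0∞) := by
        have := Finset.card_le_card_of_injOn (s := F.filter (fun a => a.val ∈ T)) (t := T)
          (f := Subtype.val)
          (fun a ha => (Finset.mem_filter.1 ha).2) (fun a _ b _ h => Subtype.ext h)
        exact_mod_cast this

end Cap10

set_option maxHeartbeats 2000000 in
/-- Lemma `lem.cap`: capacity upper bounds across general annuli.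
Let `p ∈ (1,∞)`, `d_f ≥ 1`, `β > 0`, and assume `G` satisfies `AR(d_f)` and
`cap_{p,≤}(β)`. Then for every `δ ∈ (0,1)` there is `C(δ) > 0`, depending only on
`δ, p, d_f, β` and the constants of `AR(d_f)` and `cap_{p,≤}(β)`, such that
`cap_p(B(x,δR), V∖B(x,R)) ≤ C(δ)·#B(x,δR)/R^β` for all `x ∈ V` and `R ≥ δ⁻¹`. -/



theorem statement10 (p df β : ℝ) (hp : 1 < p) (hdf : 1 ≤ df) (hβ : 0 < β)
    (CAR Ccap Acap : ℝ) (hCAR : 1 ≤ CAR) (hCcap : 0 < Ccap) (hAcap : 1 ≤ Acap)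
    (δ : ℝ) (hδ : δ ∈ Set.Ioo (0 : ℝ) 1) :
    ∃ C : ℝ, 0 < C ∧
      ∀ (V : Type) (G : SimpleGraph V),
        G.Connected → Paper.LocFin G →
        Paper.ARreg G df CAR → Paper.CapUB G p β Ccap Acap →
        ∀ (x : V) (R : ℝ), δ⁻¹ ≤ R →
          Paper.pCap G p (Paper.gBall G x (δ * R)) ((Paper.gBall G x R)ᶜ) Set.univ ≤
            ENNReal.ofReal (C * ((Paper.gBall G x (δ * R)).ncard : ℝ) / R ^ β) := by
  classical
  obtain ⟨hδ0, hδ1⟩ := hδ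
  have hp0 : (0:ℝ) < p := lt_trans one_pos hp
  have hCARp : (0:ℝ) < CAR := lt_of_lt_of_le one_pos hCAR
  have hAcapp : (0:ℝ) < Acap := lt_of_lt_of_le one_pos hAcap
  set ε : ℝ := min ((1 - δ) / 2) (2 * Acap)⁻¹ with hεdef
  have hε0 : 0 < ε := lt_min (by linarith) (by positivity)
  have hε2δ : 2 * ε ≤ 1 - δ := by
    have h := min_le_left ((1 - δ) / 2) (2 * Acap)⁻¹
    rw [← hεdef] at h; linarith
  have hεA : Acap * ε ≤ 1 / 2 := by
    have h : ε ≤ (2 * Acap)⁻¹ := by rw [hεdef]; exact min_le_right _ _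
    have h2 : Acap * (2 * Acap)⁻¹ = 1 / 2 := by
      rw [mul_comm 2 Acap, mul_inv, ← mul_assoc, mul_inv_cancel₀ hAcapp.ne']
      norm_num
    nlinarith
  have hεhalf : ε ≤ 1 / 2 := by nlinarith [mul_le_mul_of_nonneg_right hAcap hε0.le]
  set R₀ : ℝ := 4 / ε with hR₀def
  have hR₀pos : 0 < R₀ := by positivity
  have h4df : (0:ℝ) < (4:ℝ) ^ df := Real.rpow_pos_of_pos (by norm_num) _
  have h2df : (0:ℝ) < (2:ℝ) ^ df := Real.rpow_pos_of_pos (by norm_num) _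
  have hδdf : (0:ℝ) < δ ^ df := Real.rpow_pos_of_pos hδ0 _
  have hεdf : (0:ℝ) < ε ^ df := Real.rpow_pos_of_pos hε0 _
  have hεβ : (0:ℝ) < ε ^ β := Real.rpow_pos_of_pos hε0 _
  have hR₀df : (0:ℝ) < R₀ ^ df := Real.rpow_pos_of_pos hR₀pos _
  have hR₀β : (0:ℝ) < R₀ ^ β := Real.rpow_pos_of_pos hR₀pos _
  set C₁ : ℝ := CAR ^ 4 * (4:ℝ) ^ df * Ccap * (δ ^ df)⁻¹ * (ε ^ β)⁻¹ with hC₁def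
  set C₂ : ℝ := 2 * CAR ^ 2 * (2:ℝ) ^ df * (R₀ ^ df * R₀ ^ β) with hC₂def
  have hC₁pos : 0 < C₁ := by
    rw [hC₁def]
    exact mul_pos (mul_pos (mul_pos (mul_pos (pow_pos hCARp 4) h4df) hCcap)
      (inv_pos.2 hδdf)) (inv_pos.2 hεβ)
  have hC₂pos : 0 < C₂ := by
    rw [hC₂def]
    exact mul_pos (mul_pos (mul_pos two_pos (pow_pos hCARp 2)) h2df) (mul_pos hR₀df hR₀β)
  refine ⟨max C₁ C₂, lt_max_iff.2 (Or.inl hC₁pos), ?_⟩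
  intro V G hG hLF hAR hCap x R hRδ
  have hδinv : (1:ℝ) < δ⁻¹ := by
    nlinarith [mul_pos (inv_pos.2 hδ0) (sub_pos.2 hδ1), mul_inv_cancel₀ hδ0.ne']
  have hR1 : (1:ℝ) < R := lt_of_lt_of_le hδinv hRδ
  have hR0 : (0:ℝ) < R := by linarith only [hR1]
  have hδR1 : (1:ℝ) ≤ δ * R := by
    have h := mul_le_mul_of_nonneg_left hRδ hδ0.le
    rwa [mul_inv_cancel₀ hδ0.ne'] at h
  have hδRleR : δ * R ≤ R := by nlinarith only [hδ1, hR0, hδ0]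
  have hxball : x ∈ Paper.gBall G x (δ * R) := by
    show ((G.dist x x : ℕ) : ℝ) < δ * R
    rw [SimpleGraph.dist_self]; push_cast; linarith only [hδR1]
  have hRβ : (0:ℝ) < R ^ β := Real.rpow_pos_of_pos hR0 _
  by_cases hne : ((Paper.gBall G x R)ᶜ).Nonempty
  swap
  · have h1 : ∀ z ∈ (Paper.gBall G x R)ᶜ, (fun _ : V => (0:ℝ)) z = 1 := by
      intro z hz; exact absurd ⟨z, hz⟩ hne
    have hcap0 := Cap10.pCap_le G p (Paper.gBall G x (δ*R)) ((Paper.gBall G x R)ᶜ) Set.univ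
        (fun _ => 0) (fun _ _ => rfl) h1
    rw [Cap10.pEnergy_zero G (ne_of_gt hp0) _] at hcap0
    exact le_trans hcap0 (by positivity)
  obtain ⟨y₀, hy₀⟩ := hne
  have hwit : R ≤ (G.dist x y₀ : ℝ) := not_lt.1 hy₀
  have hdiam' : ∀ r : ℝ, r ≤ (G.dist x y₀ : ℝ) → ENNReal.ofReal r ≤ Paper.gDiam G Set.univ := by
    intro r hr
    have h1 : ENNReal.ofReal r ≤ ((G.dist x y₀ : ℕ) : ℝ≥0∞) := by
      rw [← ENNReal.ofReal_natCast]
      exact ENNReal.ofReal_le_ofReal hr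
    refine h1.trans ?_
    have h2 : ((G.dist x y₀ : ℕ) : ℝ≥0∞) ≤ ⨆ (a : V), ⨆ (b : V), ((G.dist a b : ℕ) : ℝ≥0∞) :=
      le_iSup₂ (f := fun a b => ((G.dist a b : ℕ) : ℝ≥0∞)) x y₀
    refine h2.trans ?_
    simp [Paper.gDiam]
  have hdiam : ∀ r : ℝ, r ≤ R → ENNReal.ofReal r ≤ Paper.gDiam G Set.univ :=
    fun r hr => hdiam' r (hr.trans hwit)
  have hdiamlt : ∀ r : ℝ, r < R → ENNReal.ofReal r < Paper.gDiam G Set.univ := by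
    intro r hr
    exact lt_of_lt_of_le ((ENNReal.ofReal_lt_ofReal_iff (by linarith only [hR0])).2 hr) (hdiam R le_rfl)
  have hdiam2 : ENNReal.ofReal 2 ≤ Paper.gDiam G Set.univ := by
    refine hdiam' 2 ?_
    have h1 : 1 < G.dist x y₀ := by exact_mod_cast lt_of_lt_of_le hR1 hwit
    have h2 : 2 ≤ G.dist x y₀ := h1
    exact_mod_cast h2
  have hdeg : ∀ v : V, ((G.neighborSet v).ncard : ℝ) ≤ CAR * (2:ℝ) ^ df := by
    intro v
    obtain ⟨hfin2, -, hup⟩ := hAR v 2 one_le_two hdiam2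
    refine le_trans ?_ hup
    have hsub : G.neighborSet v ⊆ Paper.gBall G v 2 := by
      intro u hu
      show ((G.dist v u : ℕ) : ℝ) < 2
      have h1 : G.dist v u = 1 := SimpleGraph.dist_eq_one_iff_adj.2 hu
      rw [h1]; norm_num
    exact_mod_cast Set.ncard_le_ncard hsub hfin2
  obtain ⟨hfinδ, hlowδ, -⟩ := hAR x (δ * R) hδR1 (hdiam _ hδRleR)
  have hnB0 : (0:ℝ) < ((Paper.gBall G x (δ*R)).ncard : ℝ) := by
    exact_mod_cast (Set.ncard_pos hfinδ).2 ⟨x, hxball⟩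
  have hnB1 : (1:ℝ) ≤ ((Paper.gBall G x (δ*R)).ncard : ℝ) := by
    exact_mod_cast (Set.ncard_pos hfinδ).2 ⟨x, hxball⟩
  obtain ⟨hfinR, -, hupR⟩ := hAR x R hR1.le (hdiam R le_rfl)
  by_cases hsmall : R ≤ R₀
  · -- small radii: crude estimate via the indicator test function
    set m : ℕ := ⌈R⌉₊ with hm
    set f : V → ℝ := fun v => if G.dist x v < m then 0 else 1 with hf
    have hf0 : ∀ z ∈ Paper.gBall G x (δ * R), f z = 0 := by
      intro z hz
      have h1 : ((G.dist x z : ℕ) : ℝ) < δ * R := hz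
      have h2 : ((G.dist x z : ℕ) : ℝ) < (m:ℝ) :=
        lt_of_lt_of_le (lt_of_lt_of_le h1 hδRleR) (Nat.le_ceil R)
      have h3 : G.dist x z < m := by exact_mod_cast h2
      simp [hf, h3]
    have hf1 : ∀ z ∈ (Paper.gBall G x R)ᶜ, f z = 1 := by
      intro z hz
      have h1 : R ≤ ((G.dist x z : ℕ) : ℝ) := not_lt.1 hz
      have h2 : m ≤ G.dist x z := Nat.ceil_le.2 h1
      have h3 : ¬ (G.dist x z < m) := not_lt.2 h2
      simp [hf, h3]
    set WF : Finset V := hfinR.toFinset with hWF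
    set TF : Finset (V × V) := WF.biUnion (fun w =>
        ((hLF w).toFinset.image fun u => (w, u)) ∪ ((hLF w).toFinset.image fun u => (u, w)))
      with hTF
    have hfvals : ∀ v : V, f v = 0 ∨ f v = 1 := by
      intro v; by_cases h : G.dist x v < m <;> simp [hf, h]
    have habs1 : ∀ u v : V, |f u - f v| ≤ 1 := by
      intro u v
      rcases hfvals u with h | h <;> rcases hfvals v with h' | h' <;> rw [h, h'] <;> norm_num
    have hWmem : ∀ v : V, G.dist x v < m → v ∈ WF := by
      intro v hv
      rw [hWF, Set.Finite.mem_toFinset]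
      show ((G.dist x v : ℕ) : ℝ) < R
      have h1 : ((G.dist x v : ℕ) : ℝ) ≤ (m:ℝ) - 1 := by
        have h2 : G.dist x v + 1 ≤ m := hv
        have h3 : ((G.dist x v : ℕ) : ℝ) + 1 ≤ (m : ℝ) := by exact_mod_cast h2
        linarith only [h3]
      have h2 : (m:ℝ) - 1 < R := by
        have := Nat.ceil_lt_add_one hR0.le
        rw [← hm] at this
        linarith only [this]
      linarith only [h1, h2]
    have hsupp : ∀ (e : {e : V × V // G.Adj e.1 e.2 ∧ e.1 ∈ Set.univ ∧ e.2 ∈ Set.univ}),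
        ENNReal.ofReal (|f e.1.1 - f e.1.2| ^ p) ≠ 0 → e.val ∈ TF := by
      intro e hnz
      have hfne : f e.1.1 ≠ f e.1.2 := by
        intro hEq
        exact hnz (by rw [hEq, sub_self, abs_zero, Real.zero_rpow (ne_of_gt hp0),
          ENNReal.ofReal_zero])
      have hadj := e.2.1
      rw [hTF, Finset.mem_biUnion]
      rcases hfvals e.1.1 with h | h
      · have hu : G.dist x e.1.1 < m := by
          by_contra hcon; simp [hf, hcon] at h
        refine ⟨e.1.1, hWmem _ hu, ?_⟩
        rw [Finset.mem_union]
        left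
        rw [Finset.mem_image]
        exact ⟨e.1.2, by rw [Set.Finite.mem_toFinset]; exact hadj, rfl⟩
      · have h' : f e.1.2 = 0 := by
          rcases hfvals e.1.2 with h' | h'
          · exact h'
          · exact absurd (h.trans h'.symm) hfne
        have hv : G.dist x e.1.2 < m := by
          by_contra hcon; simp [hf, hcon] at h'
        refine ⟨e.1.2, hWmem _ hv, ?_⟩
        rw [Finset.mem_union]
        right
        rw [Finset.mem_image]
        exact ⟨e.1.1, by rw [Set.Finite.mem_toFinset]; exact hadj.symm, rfl⟩
    have hE : Paper.pEnergy G p Set.univ f ≤ (TF.card : ℝ≥0∞) := by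
      unfold Paper.pEnergy
      refine le_trans ENNReal.half_le_self (Cap10.tsum_le_card TF _ ?_ hsupp)
      intro e
      calc ENNReal.ofReal (|f e.1.1 - f e.1.2| ^ p)
          ≤ ENNReal.ofReal (1:ℝ) :=
            ENNReal.ofReal_le_ofReal (Real.rpow_le_one (abs_nonneg _) (habs1 _ _) hp0.le)
        _ = 1 := ENNReal.ofReal_one
    have hTFcard : (TF.card : ℝ) ≤ 2 * (CAR * (2:ℝ)^df) * ((Paper.gBall G x R).ncard : ℝ) := by
      have h1 : TF.card ≤ ∑ w ∈ WF, (((hLF w).toFinset.image fun u => (w, u)) ∪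
          ((hLF w).toFinset.image fun u => (u, w))).card := Finset.card_biUnion_le
      have h2 : ∀ w ∈ WF, (((((hLF w).toFinset.image fun u => (w, u)) ∪
          ((hLF w).toFinset.image fun u => (u, w))).card : ℕ) : ℝ) ≤ 2 * (CAR * (2:ℝ)^df) := by
        intro w _
        have hc1 : (((hLF w).toFinset.image fun u => (w, u)).card) ≤ (hLF w).toFinset.card :=
          Finset.card_image_le
        have hc2 : (((hLF w).toFinset.image fun u => (u, w)).card) ≤ (hLF w).toFinset.card :=
          Finset.card_image_le
        have hcu := Finset.card_union_le (((hLF w).toFinset.image fun u => (w, u)))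
          (((hLF w).toFinset.image fun u => (u, w)))
        have hns : ((hLF w).toFinset.card : ℝ) = ((G.neighborSet w).ncard : ℝ) := by
          rw [Set.ncard_eq_toFinset_card _ (hLF w)]
        have hd := hdeg w
        have hcast : ((((((hLF w).toFinset.image fun u => (w, u)) ∪
            ((hLF w).toFinset.image fun u => (u, w))).card : ℕ)) : ℝ)
            ≤ ((hLF w).toFinset.card : ℝ) + ((hLF w).toFinset.card : ℝ) := by
          have := le_trans hcu (add_le_add hc1 hc2)
          exact_mod_cast this
        rw [hns] at hcast
        linarith only [hcast, hd]
      calc (TF.card : ℝ) ≤ ∑ w ∈ WF, (((((hLF w).toFinset.image fun u => (w, u)) ∪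
            ((hLF w).toFinset.image fun u => (u, w))).card : ℕ) : ℝ) := by exact_mod_cast h1
        _ ≤ ∑ _w ∈ WF, 2 * (CAR * (2:ℝ)^df) := Finset.sum_le_sum h2
        _ = (WF.card : ℝ) * (2 * (CAR * (2:ℝ)^df)) := by rw [Finset.sum_const, nsmul_eq_mul]
        _ = ((Paper.gBall G x R).ncard : ℝ) * (2 * (CAR * (2:ℝ)^df)) := by
            rw [hWF, Set.ncard_eq_toFinset_card _ hfinR]
        _ = 2 * (CAR * (2:ℝ)^df) * ((Paper.gBall G x R).ncard : ℝ) := by ring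
    refine le_trans (Cap10.pCap_le G p _ _ _ f hf0 hf1) (le_trans hE ?_)
    rw [← ENNReal.ofReal_natCast]
    refine ENNReal.ofReal_le_ofReal ?_
    have hRdf : R ^ df ≤ R₀ ^ df := Real.rpow_le_rpow hR0.le hsmall (le_trans zero_le_one hdf)
    have hRβ' : R ^ β ≤ R₀ ^ β := Real.rpow_le_rpow hR0.le hsmall hβ.le
    have hRdf0 : (0:ℝ) < R ^ df := Real.rpow_pos_of_pos hR0 _
    rw [le_div_iff₀ hRβ]
    have key : R^df * R^β ≤ R₀^df * R₀^β := mul_le_mul hRdf hRβ' hRβ.le hR₀df.le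
    have hub2 : 2 * (CAR * (2:ℝ)^df) * ((Paper.gBall G x R).ncard : ℝ)
        ≤ 2 * (CAR * (2:ℝ)^df) * (CAR * R ^ df) :=
      mul_le_mul_of_nonneg_left hupR (by positivity)
    calc (TF.card : ℝ) * R ^ β ≤ (2 * (CAR * (2:ℝ)^df) * (CAR * R ^ df)) * R ^ β :=
          mul_le_mul_of_nonneg_right (hTFcard.trans hub2) hRβ.le
      _ = 2 * CAR ^ 2 * (2:ℝ)^df * (R^df * R^β) := by ring
      _ ≤ 2 * CAR ^ 2 * (2:ℝ)^df * (R₀^df * R₀^β) :=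
          mul_le_mul_of_nonneg_left key (by positivity)
      _ = C₂ := by rw [hC₂def]
      _ ≤ C₂ * ((Paper.gBall G x (δ*R)).ncard : ℝ) := le_mul_of_one_le_right hC₂pos.le hnB1
      _ ≤ max C₁ C₂ * ((Paper.gBall G x (δ*R)).ncard : ℝ) :=
          mul_le_mul_of_nonneg_right (le_max_right _ _) hnB0.le
  · -- large radii: covering argument
    push_neg at hsmall
    have hεR4 : (4:ℝ) ≤ ε * R := by
      have h1 : ε * R₀ = 4 := by rw [hR₀def]; field_simp
      nlinarith only [hε0, h1, hsmall]
    have hεR1 : (1:ℝ) ≤ ε * R := by linarith only [hεR4]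
    have hεR0 : (0:ℝ) < ε * R := by linarith only [hεR4]
    have hεR41 : (1:ℝ) ≤ ε * R / 4 := by linarith only [hεR4]
    have hεRleR : ε * R ≤ R := by nlinarith only [hεhalf, hR0, hε0]
    have h2εR : δ * R + 2 * (ε * R) ≤ R := by nlinarith only [hε2δ, hR0]
    have hεRβ : (0:ℝ) < (ε*R) ^ β := Real.rpow_pos_of_pos hεR0 _
    have hRdf0 : (0:ℝ) < R ^ df := Real.rpow_pos_of_pos hR0 _
    have hARq : ∀ y : V, (Paper.gBall G y (ε*R/4)).Finite ∧
        CAR⁻¹ * (ε*R/4) ^ df ≤ ((Paper.gBall G y (ε*R/4)).ncard : ℝ) :=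
      fun y => ⟨(hAR y _ hεR41 (hdiam _ (by linarith only [hεRleR, hεR0]))).1,
        (hAR y _ hεR41 (hdiam _ (by linarith only [hεRleR, hεR0]))).2.1⟩
    set Q : Finset V → Prop := fun S => ↑S ⊆ Paper.gBall G x (δ * R) ∧
      ∀ a ∈ S, ∀ b ∈ S, a ≠ b → ε*R/2 ≤ ((G.dist a b : ℕ) : ℝ) with hQ
    have hx𝒫 : ({x} : Finset V) ∈ hfinδ.toFinset.powerset.filter Q := by
      rw [Finset.mem_filter, Finset.mem_powerset]
      refine ⟨?_, ?_, ?_⟩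
      · intro a ha
        rw [Finset.mem_singleton] at ha
        rw [Set.Finite.mem_toFinset, ha]
        exact hxball
      · intro a ha
        rw [Finset.coe_singleton, Set.mem_singleton_iff] at ha
        rw [ha]
        exact hxball
      · intro a ha b hb hab
        rw [Finset.mem_singleton] at ha hb
        exact absurd (ha.trans hb.symm) hab
    obtain ⟨S, hSmem, hSmax⟩ := Finset.exists_max_image _ Finset.card ⟨{x}, hx𝒫⟩
    rw [Finset.mem_filter, Finset.mem_powerset] at hSmem
    have hSsub : ↑S ⊆ Paper.gBall G x (δ * R) := hSmem.2.1
    have hSsep := hSmem.2.2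
    have hScov : ∀ z ∈ Paper.gBall G x (δ * R), ∃ y ∈ S, ((G.dist y z : ℕ) : ℝ) < ε*R/2 := by
      intro z hz
      by_contra hcon
      push_neg at hcon
      have hzS : z ∉ S := by
        intro hzS
        have h1 := hcon z hzS
        rw [SimpleGraph.dist_self] at h1
        push_cast at h1
        nlinarith only [h1, hεR0]
      have hins : insert z S ∈ hfinδ.toFinset.powerset.filter Q := by
        rw [Finset.mem_filter, Finset.mem_powerset]
        refine ⟨?_, ?_, ?_⟩
        · intro a ha
          rw [Finset.mem_insert] at ha
          rcases ha with ha | ha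
          · rw [Set.Finite.mem_toFinset, ha]; exact hz
          · exact hSmem.1 ha
        · intro a ha
          rw [Finset.coe_insert, Set.mem_insert_iff] at ha
          rcases ha with ha | ha
          · rw [ha]; exact hz
          · exact hSsub ha
        · intro a ha b hb hab
          rw [Finset.mem_insert] at ha hb
          rcases ha with ha | ha
          · rcases hb with hb | hb
            · exact absurd (ha.trans hb.symm) hab
            · rw [ha, SimpleGraph.dist_comm]
              exact hcon b hb
          · rcases hb with hb | hb
            · rw [hb]
              exact hcon a ha
            · exact hSsep a ha b hb hab
      have hcard := hSmax _ hins
      rw [Finset.card_insert_of_notMem hzS] at hcard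
      omega
    have hSne : S.Nonempty := by
      obtain ⟨y, hy, -⟩ := hScov x hxball
      exact ⟨y, hy⟩
    set t : V → Finset V := fun y => (hARq y).1.toFinset with ht
    have hdisjt : ∀ a ∈ S, ∀ b ∈ S, a ≠ b → Disjoint (t a) (t b) := by
      intro a ha b hb hab
      rw [Finset.disjoint_left]
      intro z hza hzb
      simp only [ht] at hza hzb
      have h1' : z ∈ Paper.gBall G a (ε*R/4) := (Set.Finite.mem_toFinset _).1 hza
      have h2' : z ∈ Paper.gBall G b (ε*R/4) := (Set.Finite.mem_toFinset _).1 hzb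
      have h1 : ((G.dist a z : ℕ) : ℝ) < ε*R/4 := h1'
      have h2 : ((G.dist b z : ℕ) : ℝ) < ε*R/4 := h2' 
      have htri : ((G.dist a b : ℕ) : ℝ) ≤ ((G.dist a z : ℕ) : ℝ) + ((G.dist z b : ℕ) : ℝ) := by
        exact_mod_cast hG.dist_triangle
      have hsep := hSsep a ha b hb hab
      rw [SimpleGraph.dist_comm (u := z) (v := b)] at htri
      linarith only [h1, h2, htri, hsep]
    have hsubU : S.biUnion t ⊆ hfinR.toFinset := by
      intro z hz
      rw [Finset.mem_biUnion] at hz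
      obtain ⟨y, hy, hzy⟩ := hz
      have h1 : ((G.dist x y : ℕ) : ℝ) < δ * R := hSsub hy
      simp only [ht] at hzy
      have h2' : z ∈ Paper.gBall G y (ε*R/4) := (Set.Finite.mem_toFinset _).1 hzy
      have h2 : ((G.dist y z : ℕ) : ℝ) < ε*R/4 := h2' 
      rw [Set.Finite.mem_toFinset]
      show ((G.dist x z : ℕ) : ℝ) < R
      have htri : ((G.dist x z : ℕ) : ℝ) ≤ ((G.dist x y : ℕ) : ℝ) + ((G.dist y z : ℕ) : ℝ) := by
        exact_mod_cast hG.dist_triangle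
      linarith only [h1, h2, htri, h2εR, hεR0]
    have hcount2 : (S.card : ℝ) * (ε*R/4) ^ df ≤ CAR * (CAR * R ^ df) := by
      have h1 : ∀ y ∈ S, (ε*R/4) ^ df ≤ CAR * ((t y).card : ℝ) := by
        intro y _
        have h := (hARq y).2
        rw [inv_mul_le_iff₀ hCARp] at h
        rwa [Set.ncard_eq_toFinset_card _ (hARq y).1] at h
      have h2 : (S.card : ℝ) * (ε*R/4) ^ df ≤ ∑ y ∈ S, CAR * ((t y).card : ℝ) := by
        calc (S.card : ℝ) * (ε*R/4) ^ df = ∑ _y ∈ S, (ε*R/4) ^ df := by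
              rw [Finset.sum_const, nsmul_eq_mul]
          _ ≤ ∑ y ∈ S, CAR * ((t y).card : ℝ) := Finset.sum_le_sum h1
      have h3 : ∑ y ∈ S, CAR * ((t y).card : ℝ) = CAR * ((S.biUnion t).card : ℝ) := by
        rw [← Finset.mul_sum, Finset.card_biUnion hdisjt]
        push_cast
        ring
      have h4 : ((S.biUnion t).card : ℝ) ≤ ((Paper.gBall G x R).ncard : ℝ) := by
        have h5 := Finset.card_le_card hsubU
        rw [Set.ncard_eq_toFinset_card _ hfinR]
        exact_mod_cast h5
      have h6 : CAR * ((S.biUnion t).card : ℝ) ≤ CAR * (CAR * R ^ df) :=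
        mul_le_mul_of_nonneg_left (h4.trans hupR) hCARp.le
      linarith only [h2, h3, h6]
    have hcapy : ∀ y ∈ S, Paper.pCap G p (Paper.gBall G y (ε*R))
        ((Paper.gBall G y (2*(ε*R)))ᶜ) Set.univ ≤
        ENNReal.ofReal (Ccap * ((Paper.gBall G y (ε*R)).ncard : ℝ) / (ε*R) ^ β) := by
      intro y _
      refine hCap y (ε*R) hεR1 (hdiamlt _ ?_)
      nlinarith only [mul_le_mul_of_nonneg_right hεA hR0.le, hR0]
    have hcapfin : ∀ y ∈ S, Paper.pCap G p (Paper.gBall G y (ε*R))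
        ((Paper.gBall G y (2*(ε*R)))ᶜ) Set.univ ≠ ⊤ :=
      fun y hy => ne_top_of_le_ne_top ENNReal.ofReal_ne_top (hcapy y hy)
    have hsubadd : Paper.pCap G p (Paper.gBall G x (δ*R)) ((Paper.gBall G x R)ᶜ) Set.univ ≤
        ∑ y ∈ S, Paper.pCap G p (Paper.gBall G y (ε*R))
          ((Paper.gBall G y (2*(ε*R)))ᶜ) Set.univ := by
      refine ENNReal.le_of_forall_pos_le_add fun η hη _ => ?_
      set η' : ℝ≥0∞ := (η : ℝ≥0∞) / (S.card : ℝ≥0∞) with hη'def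
      have hη'0 : η' ≠ 0 := by
        rw [hη'def]
        refine ENNReal.div_ne_zero.2 ⟨?_, ENNReal.natCast_ne_top _⟩
        exact_mod_cast hη.ne'
      have hch : ∀ y ∈ S, ∃ fy : V → ℝ, (∀ v ∈ Paper.gBall G y (ε*R), fy v = 0) ∧
          (∀ v ∈ (Paper.gBall G y (2*(ε*R)))ᶜ, fy v = 1) ∧
          Paper.pEnergy G p Set.univ fy <
            Paper.pCap G p (Paper.gBall G y (ε*R)) ((Paper.gBall G y (2*(ε*R)))ᶜ) Set.univ + η' :=
        fun y hy => Cap10.exists_lt G p _ _ _ _ (ENNReal.lt_add_right (hcapfin y hy) hη'0)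
      choose! fch h0ch h1ch hEch using hch
      set g : V → ℝ := fun v => S.inf' hSne fun y => Cap10.clamp (fch y) v with hgdef
      have h0g : ∀ v ∈ Paper.gBall G x (δ*R), g v = 0 := by
        intro v hv
        obtain ⟨y, hy, hyd⟩ := hScov v hv
        have h0 : Cap10.clamp (fch y) v = 0 := Cap10.clamp_of_eq_zero (h0ch y hy v (by
          show ((G.dist y v : ℕ) : ℝ) < ε*R
          linarith only [hyd, hεR0]))
        refine le_antisymm (le_trans (Finset.inf'_le _ hy) (le_of_eq h0)) ?_
        exact Finset.le_inf' _ _ fun b _ => Cap10.clamp_nonneg _ _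
      have h1g : ∀ v ∈ (Paper.gBall G x R)ᶜ, g v = 1 := by
        intro v hv
        have hall : ∀ y ∈ S, Cap10.clamp (fch y) v = 1 := by
          intro y hy
          have hnotin : v ∉ Paper.gBall G y (2*(ε*R)) := by
            intro hvin
            have h2 : ((G.dist y v : ℕ) : ℝ) < 2*(ε*R) := hvin
            have h1 : ((G.dist x y : ℕ) : ℝ) < δ*R := hSsub hy
            have htri : ((G.dist x v : ℕ) : ℝ) ≤ ((G.dist x y : ℕ) : ℝ) +
                ((G.dist y v : ℕ) : ℝ) := by exact_mod_cast hG.dist_triangle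
            exact hv (show ((G.dist x v : ℕ) : ℝ) < R by linarith only [h1, h2, htri, h2εR])
          exact Cap10.clamp_of_eq_one (h1ch y hy v hnotin)
        obtain ⟨y, hy⟩ := hSne
        refine le_antisymm (le_trans (Finset.inf'_le _ hy) (le_of_eq (hall y hy))) ?_
        exact Finset.le_inf' _ _ fun b hb => le_of_eq (hall b hb).symm
      calc Paper.pCap G p (Paper.gBall G x (δ*R)) ((Paper.gBall G x R)ᶜ) Set.univ
          ≤ Paper.pEnergy G p Set.univ g := Cap10.pCap_le G p _ _ _ g h0g h1g
        _ ≤ ∑ y ∈ S, Paper.pEnergy G p Set.univ (Cap10.clamp (fch y)) :=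
            Cap10.pEnergy_inf' G hp0 S hSne _
        _ ≤ ∑ y ∈ S, Paper.pEnergy G p Set.univ (fch y) :=
            Finset.sum_le_sum fun y _ => Cap10.pEnergy_mono G hp0 _ _ _
              (fun u v _ => Cap10.clamp_lip _ _ _)
        _ ≤ ∑ y ∈ S, (Paper.pCap G p (Paper.gBall G y (ε*R))
              ((Paper.gBall G y (2*(ε*R)))ᶜ) Set.univ + η') :=
            Finset.sum_le_sum fun y hy => (hEch y hy).le
        _ = (∑ y ∈ S, Paper.pCap G p (Paper.gBall G y (ε*R))
              ((Paper.gBall G y (2*(ε*R)))ᶜ) Set.univ) + S.card • η' := by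
            rw [Finset.sum_add_distrib, Finset.sum_const]
        _ ≤ (∑ y ∈ S, Paper.pCap G p (Paper.gBall G y (ε*R))
              ((Paper.gBall G y (2*(ε*R)))ᶜ) Set.univ) + η := by
            refine add_le_add le_rfl ?_
            rw [nsmul_eq_mul, hη'def]
            exact ENNReal.mul_div_le
    have hbally : ∀ y ∈ S, ((Paper.gBall G y (ε*R)).ncard : ℝ) ≤ CAR * (ε*R) ^ df :=
      fun y _ => (hAR y (ε*R) hεR1 (hdiam _ hεRleR)).2.2
    set K : ℝ := Ccap * (CAR * (ε*R) ^ df) / (ε*R) ^ β with hK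
    have hstep : ∑ y ∈ S, Paper.pCap G p (Paper.gBall G y (ε*R))
        ((Paper.gBall G y (2*(ε*R)))ᶜ) Set.univ ≤ ENNReal.ofReal ((S.card : ℝ) * K) := by
      calc ∑ y ∈ S, Paper.pCap G p (Paper.gBall G y (ε*R))
            ((Paper.gBall G y (2*(ε*R)))ᶜ) Set.univ
          ≤ ∑ _y ∈ S, ENNReal.ofReal K := by
            refine Finset.sum_le_sum fun y hy => le_trans (hcapy y hy)
              (ENNReal.ofReal_le_ofReal ?_)
            rw [hK]
            have hnum : Ccap * ((Paper.gBall G y (ε*R)).ncard : ℝ) ≤ Ccap * (CAR * (ε*R) ^ df) :=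
              mul_le_mul_of_nonneg_left (hbally y hy) hCcap.le
            exact (div_le_div_iff_of_pos_right hεRβ).2 hnum
        _ = S.card • ENNReal.ofReal K := Finset.sum_const _
        _ = ENNReal.ofReal ((S.card : ℝ) * K) := by
            rw [nsmul_eq_mul, ← ENNReal.ofReal_natCast, ← ENNReal.ofReal_mul (Nat.cast_nonneg _)]
    refine le_trans hsubadd (le_trans hstep (ENNReal.ofReal_le_ofReal ?_))
    -- real arithmetic
    have hexp1 : (ε*R) ^ df = ε^df * R^df := Real.mul_rpow hε0.le hR0.le
    have hexp2 : (ε*R) ^ β = ε^β * R^β := Real.mul_rpow hε0.le hR0.le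
    have hexp3 : (ε*R/4) ^ df = ε^df / (4:ℝ)^df * R^df := by
      rw [show ε*R/4 = ε/4*R by ring, Real.mul_rpow (by positivity) hR0.le,
        Real.div_rpow hε0.le (by norm_num)]
    have hexp4 : (δ*R) ^ df = δ^df * R^df := Real.mul_rpow hδ0.le hR0.le
    have hN : (S.card : ℝ) * ε^df ≤ CAR^2 * (4:ℝ)^df := by
      have h := hcount2
      rw [hexp3] at h
      have h2 : ((S.card : ℝ) * ε^df) * R^df ≤ (CAR^2 * (4:ℝ)^df) * R^df := by
        have h3 := mul_le_mul_of_nonneg_right h h4df.le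
        have h4 : (S.card : ℝ) * (ε^df / (4:ℝ)^df * R^df) * (4:ℝ)^df
            = ((S.card : ℝ) * ε^df) * R^df := by field_simp
        nlinarith only [h3, h4]
      exact le_of_mul_le_mul_right h2 hRdf0
    have hnBa : δ^df * R^df ≤ CAR * ((Paper.gBall G x (δ*R)).ncard : ℝ) := by
      have h := hlowδ
      rw [hexp4] at h
      rwa [inv_mul_le_iff₀ hCARp] at h
    have goal2 : (S.card : ℝ) * Ccap * CAR * ε^df * R^df ≤
        C₁ * ((Paper.gBall G x (δ*R)).ncard : ℝ) * ε^β := by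
      calc (S.card : ℝ) * Ccap * CAR * ε^df * R^df
          = ((S.card : ℝ) * ε^df) * (Ccap * CAR * R^df) := by ring
        _ ≤ (CAR^2 * (4:ℝ)^df) * (Ccap * CAR * R^df) :=
            mul_le_mul_of_nonneg_right hN
              (mul_nonneg (mul_nonneg hCcap.le hCARp.le) hRdf0.le)
        _ = (CAR^3 * (4:ℝ)^df * Ccap * (δ^df)⁻¹) * (δ^df * R^df) := by field_simp
        _ ≤ (CAR^3 * (4:ℝ)^df * Ccap * (δ^df)⁻¹) * (CAR * ((Paper.gBall G x (δ*R)).ncard : ℝ)) :=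
            mul_le_mul_of_nonneg_left hnBa
              (by positivity)
        _ = C₁ * ((Paper.gBall G x (δ*R)).ncard : ℝ) * ε^β := by
            rw [hC₁def]; field_simp
    have h7 : (S.card : ℝ) * K
        = ((S.card : ℝ) * Ccap * CAR * ε^df * R^df) / (ε^β * R^β) := by
      rw [hK, hexp1, hexp2]; ring
    rw [h7, div_le_div_iff₀ (mul_pos hεβ hRβ) hRβ]
    calc ((S.card : ℝ) * Ccap * CAR * ε^df * R^df) * R^β
        ≤ (C₁ * ((Paper.gBall G x (δ*R)).ncard : ℝ) * ε^β) * R^β :=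
          mul_le_mul_of_nonneg_right goal2 hRβ.le
      _ = (C₁ * ((Paper.gBall G x (δ*R)).ncard : ℝ)) * (ε^β * R^β) := by ring
      _ ≤ (max C₁ C₂ * ((Paper.gBall G x (δ*R)).ncard : ℝ)) * (ε^β * R^β) :=
          mul_le_mul_of_nonneg_right
            (mul_le_mul_of_nonneg_right (le_max_left _ _) hnB0.le)
            (mul_pos hεβ hRβ).le
end

section
/- Let p > 0 and let G₁ = (V, E₁) and G₂ = (V, E₂) be connected simple undirected graphs on the same vertex set with E₂ ⊆ E₁ and L* := deg(G₁) < ∞. Suppose there exists D* ≥ 1 such that d₂(x,y) ≤ D* for every edge {x,y} ∈ E₁ ∖ E₂, where d₂ is the graph distance of G₂. Then for every f : V → ℝ: 𝔈_p^{G₂}(f) ≤ 𝔈_p^{G₁}(f) ≤ (1 + L*^{2D*}·max(D*^{p−1}, 1))·𝔈_p^{G₂}(f). -/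
open scoped ENNReal NNReal

section Aux
open Finset
namespace S18

lemma nat_le_two_pow_pred : ∀ m : ℕ, 1 ≤ m → m ≤ 2 ^ (m - 1) := by
  intro m hm
  have : m - 1 < 2 ^ (m - 1) := Nat.lt_two_pow_self
  omega

lemma geom_le {L : ℕ} (hL : 2 ≤ L) (k : ℕ) :
    ∑ j ∈ range (k + 1), L ^ j ≤ 2 * L ^ k := by
  induction k with
  | zero => simp
  | succ n ih =>
    rw [Finset.sum_range_succ]
    have h2 : 2 * L ^ n ≤ L ^ (n + 1) := by
      rw [pow_succ, mul_comm]
      exact Nat.mul_le_mul le_rfl hL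
    calc ∑ j ∈ range (n + 1), L ^ j + L ^ (n + 1) ≤ 2 * L ^ n + L ^ (n + 1) := by omega
      _ ≤ L ^ (n + 1) + L ^ (n + 1) := by omega
      _ = 2 * L ^ (n + 1) := by ring

lemma main_nat_bound {L m : ℕ} (hL : 2 ≤ L) (hm : 1 ≤ m) :
    m * (4 * L ^ (m - 1)) ≤ L ^ (2 * m) := by
  have h1 : m * (4 * L ^ (m - 1)) = 4 * m * L ^ (m - 1) := by ring
  rw [h1]
  have h4m : 4 * m ≤ L ^ (m + 1) := by
    calc 4 * m ≤ 4 * 2 ^ (m - 1) := by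
          have := nat_le_two_pow_pred m hm; omega
      _ = 2 ^ (m + 1) := by
          have : m - 1 + 2 = m + 1 := by omega
          rw [← this]; ring
      _ ≤ L ^ (m + 1) := Nat.pow_le_pow_left hL _
  calc 4 * m * L ^ (m - 1) ≤ L ^ (m + 1) * L ^ (m - 1) := by
        exact Nat.mul_le_mul h4m le_rfl
    _ = L ^ (m + 1 + (m - 1)) := by rw [← pow_add]
    _ ≤ L ^ (2 * m) := Nat.pow_le_pow_right (by omega) (by omega)



lemma telescope {G : SimpleGraph V} {x y : V} (W : G.Walk x y) (f : V → ℝ) :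
    ∀ n : ℕ, |f x - f (W.getVert n)| ≤
      ∑ i ∈ range n, |f (W.getVert i) - f (W.getVert (i + 1))| := by
  intro n
  induction n with
  | zero => simp [W.getVert_zero]
  | succ n ih =>
    rw [Finset.sum_range_succ]
    calc |f x - f (W.getVert (n + 1))|
        ≤ |f x - f (W.getVert n)| + |f (W.getVert n) - f (W.getVert (n + 1))| :=
          abs_sub_le _ _ _
      _ ≤ _ := by gcongr

lemma dist_getVert_le {G₁ G₂ : SimpleGraph V} (hc : G₁.Connected) (hle : G₂ ≤ G₁)
    {x y : V} (W : G₂.Walk x y) : ∀ i : ℕ, G₁.dist x (W.getVert i) ≤ i := by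
  intro i
  induction i with
  | zero => simp [W.getVert_zero]
  | succ i ih =>
    have hstep : G₁.dist (W.getVert i) (W.getVert (i + 1)) ≤ 1 := by
      by_cases h : i < W.length
      · have hadj : G₁.Adj (W.getVert i) (W.getVert (i + 1)) :=
          hle (W.adj_getVert_succ h)
        have := SimpleGraph.dist_le (SimpleGraph.Walk.cons hadj SimpleGraph.Walk.nil)
        simpa using this
      · push_neg at h
        rw [W.getVert_of_length_le h, W.getVert_of_length_le (by omega)]
        simp [SimpleGraph.dist_self]
    calc G₁.dist x (W.getVert (i + 1))
        ≤ G₁.dist x (W.getVert i) + G₁.dist (W.getVert i) (W.getVert (i + 1)) :=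
          hc.dist_triangle
      _ ≤ i + 1 := by omega

/-- two point subadditivity of `x ↦ x ^ p` for `0 ≤ p ≤ 1` on nonneg reals. -/
lemma rpow_add_le_two {p : ℝ} (hp : 0 ≤ p) (hp1 : p ≤ 1) {x y : ℝ} (hx : 0 ≤ x) (hy : 0 ≤ y) :
    (x + y) ^ p ≤ x ^ p + y ^ p := by
  have h := NNReal.rpow_add_le_add_rpow x.toNNReal y.toNNReal hp hp1
  have h2 := NNReal.coe_le_coe.mpr h
  push_cast at h2
  rwa [Real.coe_toNNReal x hx, Real.coe_toNNReal y hy] at h2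

lemma sum_rpow_le {p : ℝ} (hp : 0 < p) {n : ℕ} (hn : 1 ≤ n) (a : ℕ → ℝ)
    (ha : ∀ i, 0 ≤ a i) {D : ℝ} (hD : 1 ≤ D) (hnD : (n : ℝ) ≤ D) :
    (∑ i ∈ range n, a i) ^ p ≤ max (D ^ (p - 1)) 1 * ∑ i ∈ range n, a i ^ p := by
  have hsum_nonneg : (0:ℝ) ≤ ∑ i ∈ range n, a i ^ p :=
    Finset.sum_nonneg fun i _ => Real.rpow_nonneg (ha i) p
  rcases le_or_gt p 1 with hp1 | hp1
  · -- subadditive case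
    have key : ∀ k : ℕ, (∑ i ∈ range k, a i) ^ p ≤ ∑ i ∈ range k, a i ^ p ∨ k = 0 := by
      intro k
      induction k with
      | zero => right; rfl
      | succ k ih =>
        left
        rcases ih with ih | rfl
        · rw [Finset.sum_range_succ, Finset.sum_range_succ]
          calc (∑ i ∈ range k, a i + a k) ^ p
              ≤ (∑ i ∈ range k, a i) ^ p + a k ^ p :=
                rpow_add_le_two hp.le hp1 (Finset.sum_nonneg fun i _ => ha i) (ha k)
            _ ≤ _ := by gcongr
        · simp
    rcases key n with key | key
    · calc (∑ i ∈ range n, a i) ^ p ≤ ∑ i ∈ range n, a i ^ p := key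
        _ ≤ max (D ^ (p - 1)) 1 * ∑ i ∈ range n, a i ^ p := by
            nth_rewrite 1 [← one_mul (∑ i ∈ range n, a i ^ p)]
            exact mul_le_mul_of_nonneg_right (le_max_right _ _) hsum_nonneg
    · omega
  · -- convexity case
    have hn0 : (0:ℝ) < n := by exact_mod_cast hn
    have hw : ∑ _i ∈ range n, (n:ℝ)⁻¹ = 1 := by
      rw [Finset.sum_const, Finset.card_range, nsmul_eq_mul, mul_inv_cancel₀ hn0.ne']
    have key := Real.rpow_arith_mean_le_arith_mean_rpow (range n) (fun _ => (n:ℝ)⁻¹) a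
      (fun i _ => by positivity) hw (fun i _ => ha i) hp1.le
    rw [← Finset.mul_sum, ← Finset.mul_sum] at key
    have hmul : ((n:ℝ)⁻¹) ^ p * (∑ i ∈ range n, a i) ^ p
        ≤ (n:ℝ)⁻¹ * ∑ i ∈ range n, a i ^ p := by
      rw [← Real.mul_rpow (by positivity) (Finset.sum_nonneg fun i _ => ha i)]
      exact key
    have hfinal : (∑ i ∈ range n, a i) ^ p ≤ (n:ℝ) ^ (p - 1) * ∑ i ∈ range n, a i ^ p := by
      have h1 : (∑ i ∈ range n, a i) ^ p
          = (n:ℝ) ^ p * (((n:ℝ)⁻¹) ^ p * (∑ i ∈ range n, a i) ^ p) := by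
        rw [← mul_assoc, ← Real.mul_rpow (by positivity) (by positivity),
          mul_inv_cancel₀ hn0.ne', Real.one_rpow, one_mul]
      rw [h1]
      calc (n:ℝ) ^ p * (((n:ℝ)⁻¹) ^ p * (∑ i ∈ range n, a i) ^ p)
          ≤ (n:ℝ) ^ p * ((n:ℝ)⁻¹ * ∑ i ∈ range n, a i ^ p) := by
            exact mul_le_mul_of_nonneg_left hmul (Real.rpow_nonneg hn0.le p)
        _ = (n:ℝ) ^ (p - 1) * ∑ i ∈ range n, a i ^ p := by
            rw [← mul_assoc]
            congr 1
            rw [Real.rpow_sub hn0, Real.rpow_one, div_eq_mul_inv]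
    calc (∑ i ∈ range n, a i) ^ p ≤ (n:ℝ) ^ (p - 1) * ∑ i ∈ range n, a i ^ p := hfinal
      _ ≤ max (D ^ (p - 1)) 1 * ∑ i ∈ range n, a i ^ p := by
          apply mul_le_mul_of_nonneg_right _ hsum_nonneg
          exact le_trans (Real.rpow_le_rpow hn0.le hnD (by linarith)) (le_max_left _ _)



lemma sphere_bound {G : SimpleGraph V} (hc : G.Connected) {L : ℕ}
    (hdeg : ∀ v : V, (G.neighborSet v).Finite ∧ (G.neighborSet v).ncard ≤ L) (u : V) :
    ∀ j : ℕ, {y | G.dist u y = j}.Finite ∧ {y | G.dist u y = j}.ncard ≤ L ^ j := by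
  classical
  intro j
  induction j with
  | zero =>
    have h : {y | G.dist u y = 0} = {u} := by
      ext y
      simp only [Set.mem_setOf_eq, Set.mem_singleton_iff]
      constructor
      · intro h
        exact ((hc.dist_eq_zero_iff).mp h).symm
      · rintro rfl; simp [SimpleGraph.dist_self]
    rw [h]
    simp
  | succ j ih =>
    obtain ⟨hfin, hcard⟩ := ih
    have hsub : {y | G.dist u y = j + 1} ⊆
        ⋃ p ∈ {y | G.dist u y = j}, G.neighborSet p := by
      intro y hy
      have hy' : G.dist u y = j + 1 := hy
      have hne : G.dist u y ≠ 0 := by omega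
      obtain ⟨P, hP⟩ := SimpleGraph.exists_walk_of_dist_ne_zero hne
      set q := P.getVert j with hq
      have hql : j < P.length := by omega
      have hadj : G.Adj q y := by
        have := P.adj_getVert_succ hql
        rwa [show j + 1 = P.length by omega, P.getVert_length] at this
      have hdq_le : G.dist u q ≤ j := by
        have h2 : G.dist u (P.getVert j) ≤ j := by
          have : ∀ i : ℕ, G.dist u (P.getVert i) ≤ i := by
            intro i
            induction i with
            | zero => simp [P.getVert_zero, SimpleGraph.dist_self]
            | succ i ih2 =>
              have hstep : G.dist (P.getVert i) (P.getVert (i + 1)) ≤ 1 := by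
                by_cases h : i < P.length
                · have := SimpleGraph.dist_le
                    (SimpleGraph.Walk.cons (P.adj_getVert_succ h) SimpleGraph.Walk.nil)
                  simpa using this
                · push_neg at h
                  rw [P.getVert_of_length_le h, P.getVert_of_length_le (by omega)]
                  simp [SimpleGraph.dist_self]
              calc G.dist u (P.getVert (i + 1))
                  ≤ G.dist u (P.getVert i) + G.dist (P.getVert i) (P.getVert (i + 1)) :=
                    hc.dist_triangle
                _ ≤ i + 1 := by omega
          exact this j
        exact h2
      have hdq_ge : j ≤ G.dist u q := by
        have htri : G.dist u y ≤ G.dist u q + G.dist q y := hc.dist_triangle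
        have hqy : G.dist q y ≤ 1 := by
          have := SimpleGraph.dist_le (SimpleGraph.Walk.cons hadj SimpleGraph.Walk.nil)
          simpa using this
        omega
      have hdq : G.dist u q = j := le_antisymm hdq_le hdq_ge
      exact Set.mem_biUnion (show q ∈ {y | G.dist u y = j} from hdq) hadj
    have hfin2 : (⋃ p ∈ {y | G.dist u y = j}, G.neighborSet p).Finite :=
      Set.Finite.biUnion hfin fun p _ => (hdeg p).1
    constructor
    · exact hfin2.subset hsub
    · have hUF : (⋃ p ∈ {y | G.dist u y = j}, G.neighborSet p) ⊆
          ↑(hfin.toFinset.biUnion fun p => ((hdeg p).1.toFinset)) := by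
        intro y hy
        obtain ⟨p, hp, hyp⟩ := Set.mem_iUnion₂.mp hy
        simp only [Finset.coe_biUnion, Set.mem_iUnion, Set.Finite.coe_toFinset,
          Set.Finite.mem_toFinset]
        exact ⟨p, hp, hyp⟩
      calc {y | G.dist u y = j + 1}.ncard
          ≤ (↑(hfin.toFinset.biUnion fun p => ((hdeg p).1.toFinset)) : Set V).ncard :=
            Set.ncard_le_ncard (hsub.trans hUF) (Finset.finite_toSet _)
        _ = (hfin.toFinset.biUnion fun p => ((hdeg p).1.toFinset)).card :=
            Set.ncard_coe_finset _
        _ ≤ ∑ p ∈ hfin.toFinset, ((hdeg p).1.toFinset).card := Finset.card_biUnion_le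
        _ ≤ ∑ _p ∈ hfin.toFinset, L := Finset.sum_le_sum fun p _ => by
            rw [← Set.ncard_eq_toFinset_card _ (hdeg p).1]; exact (hdeg p).2
        _ = hfin.toFinset.card * L := by rw [Finset.sum_const, smul_eq_mul]
        _ ≤ L ^ j * L := by
            have hc2 : hfin.toFinset.card = {y | G.dist u y = j}.ncard :=
              (Set.ncard_eq_toFinset_card _ hfin).symm
            rw [hc2]
            exact Nat.mul_le_mul hcard le_rfl
        _ = L ^ (j + 1) := by rw [pow_succ]




lemma ball_bound {G : SimpleGraph V} (hc : G.Connected) {L : ℕ}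
    (hdeg : ∀ v : V, (G.neighborSet v).Finite ∧ (G.neighborSet v).ncard ≤ L)
    (hL : 2 ≤ L) (u : V) (k : ℕ) :
    {y | G.dist u y ≤ k}.Finite ∧ {y | G.dist u y ≤ k}.ncard ≤ 2 * L ^ k := by
  classical
  have hsub : {y | G.dist u y ≤ k} ⊆
      ↑((range (k + 1)).biUnion fun j => (sphere_bound hc hdeg u j).1.toFinset) := by
    intro y hy
    simp only [Set.mem_setOf_eq] at hy
    simp only [Finset.coe_biUnion, Set.mem_iUnion, Finset.mem_coe, Finset.mem_range,
      Set.Finite.coe_toFinset, Set.mem_setOf_eq]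
    exact ⟨G.dist u y, by omega, rfl⟩
  constructor
  · exact (Finset.finite_toSet _).subset hsub
  · calc {y | G.dist u y ≤ k}.ncard
        ≤ (↑((range (k + 1)).biUnion fun j => (sphere_bound hc hdeg u j).1.toFinset) :
            Set V).ncard := Set.ncard_le_ncard hsub (Finset.finite_toSet _)
      _ = ((range (k + 1)).biUnion fun j => (sphere_bound hc hdeg u j).1.toFinset).card :=
          Set.ncard_coe_finset _
      _ ≤ ∑ j ∈ range (k + 1), ((sphere_bound hc hdeg u j).1.toFinset).card :=
          Finset.card_biUnion_le
      _ ≤ ∑ j ∈ range (k + 1), L ^ j := Finset.sum_le_sum fun j _ => by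
          rw [← Set.ncard_eq_toFinset_card _ (sphere_bound hc hdeg u j).1]
          exact (sphere_bound hc hdeg u j).2
      _ ≤ 2 * L ^ k := geom_le hL k

lemma counting {α β : Type*} (h : α → ℝ≥0∞) (g : β → ℝ≥0∞) (φ : α → β) (N : ℕ)
    (hle : ∀ a, h a ≠ 0 → h a ≤ g (φ a))
    (hfib : ∀ b, {a | h a ≠ 0 ∧ φ a = b}.Finite ∧ {a | h a ≠ 0 ∧ φ a = b}.ncard ≤ N) :
    ∑' a, h a ≤ (N : ℝ≥0∞) * ∑' b, g b := by
  classical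
  set T : Set α := {a | h a ≠ 0} with hT
  have h1 : ∑' a, h a = ∑' a : T, h a := by
    rw [_root_.tsum_subtype]
    apply tsum_congr
    intro a
    by_cases ha : h a = 0
    · simp [Set.indicator_apply, hT, ha]
    · simp [Set.indicator_apply, hT, ha]
  have h2 : ∑' a : T, h a ≤ ∑' a : T, g (φ a.1) :=
    ENNReal.tsum_le_tsum fun a => hle a.1 a.2
  have h3 : ∑' a : T, g (φ a.1) = ∑' b, ∑' a : {a : T // φ a.1 = b}, g b := by
    calc ∑' a : T, g (φ a.1)
        = ∑' q : Σ b, {a : T // φ a.1 = b}, g (φ q.2.1.1) :=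
          ((Equiv.sigmaFiberEquiv fun a : T => φ a.1).tsum_eq
            (fun a : T => g (φ a.1))).symm
      _ = ∑' q : Σ b, {a : T // φ a.1 = b}, g q.1 := tsum_congr fun q => by rw [q.2.2]
      _ = ∑' b, ∑' a : {a : T // φ a.1 = b}, g b :=
          ENNReal.tsum_sigma' (fun q : Σ b, {a : T // φ a.1 = b} => g q.1)
  have h4 : ∀ b : β, ∑' _a : {a : T // φ a.1 = b}, g b ≤ (N : ℝ≥0∞) * g b := by
    intro b
    have hequiv : {a : T // φ a.1 = b} ≃ {a : α // h a ≠ 0 ∧ φ a = b} :=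
      { toFun := fun a => ⟨a.1.1, a.1.2, a.2⟩
        invFun := fun a => ⟨⟨a.1, a.2.1⟩, a.2.2⟩
        left_inv := fun a => rfl
        right_inv := fun a => rfl }
    haveI : Finite {a : α // h a ≠ 0 ∧ φ a = b} := (hfib b).1
    haveI : Finite {a : T // φ a.1 = b} := Finite.of_equiv _ hequiv.symm
    haveI : Fintype {a : T // φ a.1 = b} := Fintype.ofFinite _
    rw [tsum_fintype]
    rw [Finset.sum_const, Finset.card_univ, nsmul_eq_mul]
    apply mul_le_mul_left
    have hcard : Fintype.card {a : T // φ a.1 = b} ≤ N := by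
      have e1 : Nat.card {a : T // φ a.1 = b} = Nat.card {a : α // h a ≠ 0 ∧ φ a = b} :=
        Nat.card_congr hequiv
      have e2 : Nat.card {a : α // h a ≠ 0 ∧ φ a = b} = {a | h a ≠ 0 ∧ φ a = b}.ncard :=
        Nat.card_coe_set_eq _
      rw [← Nat.card_eq_fintype_card, e1, e2]
      exact (hfib b).2
    exact_mod_cast hcard
  calc ∑' a, h a ≤ ∑' b, ∑' _a : {a : T // φ a.1 = b}, g b := by rw [h1, ← h3]; exact h2
    _ ≤ ∑' b, (N : ℝ≥0∞) * g b := ENNReal.tsum_le_tsum h4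
    _ = (N : ℝ≥0∞) * ∑' b, g b := ENNReal.tsum_mul_left

end S18
end Aux

/-- stability of discrete energies, Proposition `prop.URI`.
Let `p > 0` and let `G₁ = (V,E₁)`, `G₂ = (V,E₂)` be connected simple graphs with
`E₂ ⊆ E₁` and `L* := deg(G₁) < ∞`. If `d₂(x,y) ≤ D*` for every `{x,y} ∈ E₁ \ E₂`, then
`𝔈_p^{G₂}(f) ≤ 𝔈_p^{G₁}(f) ≤ (1 + L*^{2D*}·max(D*^{p-1},1))·𝔈_p^{G₂}(f)` for all `f`. -/
theorem statement18 {V : Type*} (p : ℝ) (hp : 0 < p)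
    (G₁ G₂ : SimpleGraph V) (h₁ : G₁.Connected) (h₂ : G₂.Connected)
    (hE : ∀ x y : V, G₂.Adj x y → G₁.Adj x y)
    (Lstar : ℕ) (hdeg : Paper.DegLE G₁ Lstar)
    (Dstar : ℝ) (hD : 1 ≤ Dstar)
    (hdist : ∀ x y : V, G₁.Adj x y → ¬ G₂.Adj x y → (G₂.dist x y : ℝ) ≤ Dstar) :
    ∀ f : V → ℝ,
      Paper.pEnergy G₂ p Set.univ f ≤ Paper.pEnergy G₁ p Set.univ f ∧
      Paper.pEnergy G₁ p Set.univ f ≤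
        ENNReal.ofReal (1 + (Lstar : ℝ) ^ (2 * Dstar) * max (Dstar ^ (p - 1)) 1) *
          Paper.pEnergy G₂ p Set.univ f := by
  classical
  intro f
  set g : V × V → ℝ≥0∞ := fun z => ENNReal.ofReal (|f z.1 - f z.2| ^ p) with hgdef
  have hrep : ∀ G : SimpleGraph V, Paper.pEnergy G p Set.univ f
      = (∑' z : V × V, if G.Adj z.1 z.2 then g z else 0) / 2 := by
    intro G
    unfold Paper.pEnergy
    congr 1
    calc (∑' e : {e : V × V // G.Adj e.1 e.2 ∧ e.1 ∈ Set.univ ∧ e.2 ∈ Set.univ},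
          ENNReal.ofReal (|f e.1.1 - f e.1.2| ^ p))
        = ∑' z : V × V,
            ({e : V × V | G.Adj e.1 e.2 ∧ e.1 ∈ Set.univ ∧ e.2 ∈ Set.univ}).indicator g z :=
          _root_.tsum_subtype _ g
      _ = ∑' z : V × V, if G.Adj z.1 z.2 then g z else 0 := by
          refine tsum_congr fun z => ?_
          by_cases hz : G.Adj z.1 z.2 <;>
            simp [Set.indicator_apply, hz]
  set ind₁ : V × V → ℝ≥0∞ := fun z => if G₁.Adj z.1 z.2 then g z else 0 with hind₁
  set ind₂ : V × V → ℝ≥0∞ := fun z => if G₂.Adj z.1 z.2 then g z else 0 with hind₂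
  have hmono : ∑' z, ind₂ z ≤ ∑' z, ind₁ z := by
    refine ENNReal.tsum_le_tsum fun z => ?_
    by_cases h : G₂.Adj z.1 z.2
    · simp [hind₁, hind₂, h, hE _ _ h]
    · simp [hind₂, h]
  constructor
  · rw [hrep G₁, hrep G₂]
    exact ENNReal.div_le_div_right hmono 2
  · rw [hrep G₁, hrep G₂]
    set M : ℝ := max (Dstar ^ (p - 1)) 1 with hMdef
    set c : ℝ≥0∞ := ENNReal.ofReal (1 + (Lstar : ℝ) ^ (2 * Dstar) * M) with hcdef
    have hM0 : (0:ℝ) ≤ M := le_trans zero_le_one (le_max_right _ _)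
    have hL2D0 : (0:ℝ) ≤ (Lstar : ℝ) ^ (2 * Dstar) := Real.rpow_nonneg (Nat.cast_nonneg _) _
    have hc1 : (1 : ℝ≥0∞) ≤ c := by
      rw [hcdef, ENNReal.one_le_ofReal]
      nlinarith [mul_nonneg hL2D0 hM0]
    suffices hkey : ∑' z, ind₁ z ≤ c * ∑' z, ind₂ z by
      calc (∑' z, ind₁ z) / 2 ≤ (c * ∑' z, ind₂ z) / 2 := ENNReal.div_le_div_right hkey 2
        _ = c * ((∑' z, ind₂ z) / 2) := by rw [mul_div_assoc]
    by_cases hS : ∀ z : V × V, G₁.Adj z.1 z.2 → G₂.Adj z.1 z.2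
    · have hpw : ∀ z, ind₁ z ≤ ind₂ z := by
        intro z
        by_cases h : G₁.Adj z.1 z.2
        · simp [hind₁, hind₂, h, hS z h]
        · simp [hind₁, h]
      calc ∑' z, ind₁ z ≤ ∑' z, ind₂ z := ENNReal.tsum_le_tsum hpw
        _ ≤ c * ∑' z, ind₂ z := le_mul_of_one_le_left zero_le hc1
    · push_neg at hS
      obtain ⟨z₀, hz₀1, hz₀2⟩ := hS
      have hG₂le : G₂ ≤ G₁ := fun {a b} h => hE a b h
      set m : ℕ := ⌊Dstar⌋₊ with hmdef
      have hm1 : 1 ≤ m := Nat.le_floor (by exact_mod_cast hD)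
      have hmD : (m : ℝ) ≤ Dstar := Nat.floor_le (by linarith)
      have hWall : ∀ z : V × V, ∃ W : G₂.Walk z.1 z.2,
          G₁.Adj z.1 z.2 → ¬G₂.Adj z.1 z.2 → 1 ≤ W.length ∧ W.length ≤ m := by
        intro z
        by_cases hz : G₁.Adj z.1 z.2 ∧ ¬ G₂.Adj z.1 z.2
        · have hre : G₂.Reachable z.1 z.2 := h₂.preconnected z.1 z.2
          obtain ⟨W, hWl⟩ := hre.exists_walk_length_eq_dist
          have hdle : (G₂.dist z.1 z.2 : ℝ) ≤ Dstar := hdist z.1 z.2 hz.1 hz.2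
          have hd1 : 0 < G₂.dist z.1 z.2 := hre.pos_dist_of_ne hz.1.ne
          exact ⟨W, fun _ _ => ⟨by omega, by rw [hWl]; exact Nat.le_floor hdle⟩⟩
        · obtain ⟨W⟩ := h₂.preconnected z.1 z.2
          exact ⟨W, fun ha hn => absurd ⟨ha, hn⟩ hz⟩
      choose W hW using hWall
      have hL2 : 2 ≤ Lstar := by
        have hlen : 0 < (W z₀).length := by
          rcases Nat.eq_zero_or_pos (W z₀).length with h | h
          · exact absurd (SimpleGraph.Walk.eq_of_length_eq_zero h) hz₀1.ne
          · exact h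
        have hadj2 : G₂.Adj z₀.1 ((W z₀).getVert 1) := by
          have := (W z₀).adj_getVert_succ (i := 0) hlen
          rwa [(W z₀).getVert_zero] at this
        have hwy : (W z₀).getVert 1 ≠ z₀.2 := fun h => hz₀2 (h ▸ hadj2)
        have hsub2 : ({z₀.2, (W z₀).getVert 1} : Set V) ⊆ G₁.neighborSet z₀.1 := by
          intro t ht
          rcases ht with h | h
          · subst h; exact hz₀1
          · simp only [Set.mem_singleton_iff] at h
            subst h; exact hE _ _ hadj2
        calc 2 = ({z₀.2, (W z₀).getVert 1} : Set V).ncard :=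
              (Set.ncard_pair (Ne.symm hwy)).symm
          _ ≤ (G₁.neighborSet z₀.1).ncard := Set.ncard_le_ncard hsub2 (hdeg z₀.1).1
          _ ≤ Lstar := (hdeg z₀.1).2
      set H : ℕ → V × V → ℝ≥0∞ := fun i z =>
        if (G₁.Adj z.1 z.2 ∧ ¬ G₂.Adj z.1 z.2) ∧ i < (W z).length then
          g ((W z).getVert i, (W z).getVert (i + 1)) else 0 with hHdef
      -- pointwise bound
      have hpt : ∀ z : V × V, ind₁ z ≤ ind₂ z
          + ENNReal.ofReal M * ∑ i ∈ Finset.range m, H i z := by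
        intro z
        by_cases h2 : G₂.Adj z.1 z.2
        · have : ind₁ z = ind₂ z := by simp [hind₁, hind₂, h2, hE _ _ h2]
          rw [this]; exact le_self_add
        · by_cases h1 : G₁.Adj z.1 z.2
          · obtain ⟨hn1, hnm⟩ := hW z h1 h2
            have hy : (W z).getVert (W z).length = z.2 := (W z).getVert_length
            have hreal : |f z.1 - f z.2| ^ p ≤ M * ∑ i ∈ Finset.range (W z).length,
                |f ((W z).getVert i) - f ((W z).getVert (i + 1))| ^ p := by
              have htel := S18.telescope (W z) f (W z).length
              rw [hy] at htel
              have h1' : |f z.1 - f z.2| ^ p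
                  ≤ (∑ i ∈ Finset.range (W z).length,
                      |f ((W z).getVert i) - f ((W z).getVert (i + 1))|) ^ p :=
                Real.rpow_le_rpow (abs_nonneg _) htel hp.le
              refine h1'.trans (S18.sum_rpow_le hp hn1 _ (fun i => abs_nonneg _) hD ?_)
              calc ((W z).length : ℝ) ≤ (m : ℝ) := by exact_mod_cast hnm
                _ ≤ Dstar := hmD
            have hHsum : ∑ i ∈ Finset.range m, H i z
                = ∑ i ∈ Finset.range (W z).length,
                    g ((W z).getVert i, (W z).getVert (i + 1)) := by
              have hzero : ∀ i ∈ Finset.range m, i ∉ Finset.range (W z).length →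
                  H i z = 0 := by
                intro i _ hi
                simp only [hHdef]
                rw [if_neg]
                rintro ⟨-, hcon⟩
                exact hi (Finset.mem_range.mpr hcon)
              rw [← Finset.sum_subset (Finset.range_subset_range.mpr hnm) hzero]
              refine Finset.sum_congr rfl fun i hi => ?_
              simp only [hHdef]
              rw [if_pos ⟨⟨h1, h2⟩, Finset.mem_range.mp hi⟩]
            have hfin : ind₁ z ≤ ENNReal.ofReal M * ∑ i ∈ Finset.range m, H i z := by
              have : ind₁ z = g z := by simp [hind₁, h1]
              rw [this, hHsum, hgdef]
              calc ENNReal.ofReal (|f z.1 - f z.2| ^ p)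
                  ≤ ENNReal.ofReal (M * ∑ i ∈ Finset.range (W z).length,
                      |f ((W z).getVert i) - f ((W z).getVert (i + 1))| ^ p) :=
                    ENNReal.ofReal_le_ofReal hreal
                _ = ENNReal.ofReal M * ENNReal.ofReal (∑ i ∈ Finset.range (W z).length,
                      |f ((W z).getVert i) - f ((W z).getVert (i + 1))| ^ p) := by
                    rw [ENNReal.ofReal_mul hM0]
                _ = ENNReal.ofReal M * ∑ i ∈ Finset.range (W z).length,
                      ENNReal.ofReal (|f ((W z).getVert i) - f ((W z).getVert (i + 1))| ^ p) := by
                    rw [ENNReal.ofReal_sum_of_nonneg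
                      (fun i _ => Real.rpow_nonneg (abs_nonneg _) p)]
            calc ind₁ z ≤ ENNReal.ofReal M * ∑ i ∈ Finset.range m, H i z := hfin
              _ ≤ ind₂ z + ENNReal.ofReal M * ∑ i ∈ Finset.range m, H i z := le_add_self
          · simp [hind₁, h1]
      -- summation
      have hsum1 : ∑' z, ind₁ z ≤ ∑' z, ind₂ z
          + ENNReal.ofReal M * ∑ i ∈ Finset.range m, ∑' z, H i z := by
        calc ∑' z, ind₁ z
            ≤ ∑' z, (ind₂ z + ENNReal.ofReal M * ∑ i ∈ Finset.range m, H i z) :=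
              ENNReal.tsum_le_tsum hpt
          _ = ∑' z, ind₂ z + ∑' z, (ENNReal.ofReal M * ∑ i ∈ Finset.range m, H i z) :=
              ENNReal.tsum_add
          _ = ∑' z, ind₂ z + ENNReal.ofReal M * ∑' z, ∑ i ∈ Finset.range m, H i z := by
              rw [ENNReal.tsum_mul_left]
          _ = ∑' z, ind₂ z + ENNReal.ofReal M * ∑ i ∈ Finset.range m, ∑' z, H i z := by
              rw [Summable.tsum_finsetSum fun i _ => ENNReal.summable]
      -- degree hypothesis unfolded
      have hdeg' : ∀ v : V, (G₁.neighborSet v).Finite ∧ (G₁.neighborSet v).ncard ≤ Lstar :=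
        hdeg
      -- per index counting bound
      have hper : ∀ i ∈ Finset.range m, ∑' z, H i z
          ≤ ((4 * Lstar ^ (m - 1) : ℕ) : ℝ≥0∞) * ∑' z, ind₂ z := by
        intro i hi
        have him : i < m := Finset.mem_range.mp hi
        refine S18.counting (H i) ind₂
          (fun z => ((W z).getVert i, (W z).getVert (i + 1))) (4 * Lstar ^ (m - 1)) ?_ ?_
        · intro z hz
          have hcond : (G₁.Adj z.1 z.2 ∧ ¬ G₂.Adj z.1 z.2) ∧ i < (W z).length := by
            by_contra hcon
            apply hz
            simp only [hHdef]
            rw [if_neg hcon]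
          have hadj : G₂.Adj ((W z).getVert i) ((W z).getVert (i + 1)) :=
            (W z).adj_getVert_succ hcond.2
          have hH : H i z = g ((W z).getVert i, (W z).getVert (i + 1)) := by
            simp only [hHdef]; rw [if_pos hcond]
          have hI : ind₂ ((W z).getVert i, (W z).getVert (i + 1))
              = g ((W z).getVert i, (W z).getVert (i + 1)) := by
            simp only [hind₂]; rw [if_pos hadj]
          rw [hH, hI]
        · intro w
          have hball_u := S18.ball_bound h₁ hdeg' hL2 w.1 i
          have hball_v := S18.ball_bound h₁ hdeg' hL2 w.2 (m - 1 - i)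
          have hsubF : {z : V × V | H i z ≠ 0 ∧
                ((W z).getVert i, (W z).getVert (i + 1)) = w}
              ⊆ {t | G₁.dist w.1 t ≤ i} ×ˢ {t | G₁.dist w.2 t ≤ m - 1 - i} := by
            rintro z ⟨hz0, hzw⟩
            have hcond : (G₁.Adj z.1 z.2 ∧ ¬ G₂.Adj z.1 z.2) ∧ i < (W z).length := by
              by_contra hcon
              apply hz0
              simp only [hHdef]
              rw [if_neg hcon]
            obtain ⟨hzS, hzn⟩ := hcond
            obtain ⟨hn1, hnm⟩ := hW z hzS.1 hzS.2
            have hu : (W z).getVert i = w.1 := congrArg Prod.fst hzw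
            have hv : (W z).getVert (i + 1) = w.2 := congrArg Prod.snd hzw
            constructor
            · show G₁.dist w.1 z.1 ≤ i
              have hd := S18.dist_getVert_le h₁ hG₂le (W z) i
              rw [hu] at hd
              rwa [SimpleGraph.dist_comm] at hd
            · show G₁.dist w.2 z.2 ≤ m - 1 - i
              have hd := S18.dist_getVert_le h₁ hG₂le (W z).reverse
                ((W z).length - (i + 1))
              rw [SimpleGraph.Walk.getVert_reverse,
                Nat.sub_sub_self (by omega : i + 1 ≤ (W z).length), hv] at hd
              rw [SimpleGraph.dist_comm]
              calc G₁.dist z.2 w.2 ≤ (W z).length - (i + 1) := by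
                    simpa [SimpleGraph.Walk.length_reverse] using hd
                _ ≤ m - 1 - i := by omega
          have hfinprod : ({t | G₁.dist w.1 t ≤ i} ×ˢ
              {t | G₁.dist w.2 t ≤ m - 1 - i} : Set (V × V)).Finite :=
            hball_u.1.prod hball_v.1
          constructor
          · exact hfinprod.subset hsubF
          · calc {z : V × V | H i z ≠ 0 ∧
                  ((W z).getVert i, (W z).getVert (i + 1)) = w}.ncard
                ≤ ({t | G₁.dist w.1 t ≤ i} ×ˢ
                    {t | G₁.dist w.2 t ≤ m - 1 - i} : Set (V × V)).ncard :=
                  Set.ncard_le_ncard hsubF hfinprod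
              _ = {t | G₁.dist w.1 t ≤ i}.ncard * {t | G₁.dist w.2 t ≤ m - 1 - i}.ncard := by
                  rw [← Nat.card_coe_set_eq, ← Nat.card_coe_set_eq,
                    ← Nat.card_coe_set_eq, ← Nat.card_prod]
                  exact Nat.card_congr (Equiv.Set.prod _ _)
              _ ≤ (2 * Lstar ^ i) * (2 * Lstar ^ (m - 1 - i)) :=
                  Nat.mul_le_mul hball_u.2 hball_v.2
              _ = 4 * Lstar ^ (m - 1) := by
                  have : i + (m - 1 - i) = m - 1 := by omega
                  calc (2 * Lstar ^ i) * (2 * Lstar ^ (m - 1 - i))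
                      = 4 * (Lstar ^ i * Lstar ^ (m - 1 - i)) := by ring
                    _ = 4 * Lstar ^ (m - 1) := by rw [← pow_add, this]
      -- numeric bound on the constant
      have hnum : ((m * (4 * Lstar ^ (m - 1)) : ℕ) : ℝ≥0∞)
          ≤ ENNReal.ofReal ((Lstar : ℝ) ^ (2 * Dstar)) := by
        have h1 : (m * (4 * Lstar ^ (m - 1)) : ℕ) ≤ Lstar ^ (2 * m) :=
          S18.main_nat_bound hL2 hm1
        have h2 : ((Lstar ^ (2 * m) : ℕ) : ℝ) ≤ (Lstar : ℝ) ^ (2 * Dstar) := by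
          push_cast
          rw [← Real.rpow_natCast (Lstar : ℝ) (2 * m)]
          apply Real.rpow_le_rpow_of_exponent_le (by exact_mod_cast hL2.trans' one_le_two)
          push_cast
          nlinarith [hmD]
        calc ((m * (4 * Lstar ^ (m - 1)) : ℕ) : ℝ≥0∞)
            ≤ ((Lstar ^ (2 * m) : ℕ) : ℝ≥0∞) := by exact_mod_cast h1
          _ = ENNReal.ofReal ((Lstar ^ (2 * m) : ℕ) : ℝ) := (ENNReal.ofReal_natCast _).symm
          _ ≤ ENNReal.ofReal ((Lstar : ℝ) ^ (2 * Dstar)) := ENNReal.ofReal_le_ofReal h2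
      -- combine everything
      calc ∑' z, ind₁ z
          ≤ ∑' z, ind₂ z + ENNReal.ofReal M * ∑ i ∈ Finset.range m, ∑' z, H i z := hsum1
        _ ≤ ∑' z, ind₂ z + ENNReal.ofReal M *
              ∑ _i ∈ Finset.range m, ((4 * Lstar ^ (m - 1) : ℕ) : ℝ≥0∞) * ∑' z, ind₂ z := by
            gcongr with i hi
            exact hper i hi
        _ = ∑' z, ind₂ z + ENNReal.ofReal M *
              (((m * (4 * Lstar ^ (m - 1)) : ℕ) : ℝ≥0∞) * ∑' z, ind₂ z) := by
            rw [Finset.sum_const, Finset.card_range, nsmul_eq_mul]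
            push_cast
            ring
        _ ≤ ∑' z, ind₂ z + ENNReal.ofReal M *
              (ENNReal.ofReal ((Lstar : ℝ) ^ (2 * Dstar)) * ∑' z, ind₂ z) := by
            gcongr
        _ = (1 + ENNReal.ofReal ((Lstar : ℝ) ^ (2 * Dstar) * M)) * ∑' z, ind₂ z := by
            rw [ENNReal.ofReal_mul hL2D0]
            ring
        _ = c * ∑' z, ind₂ z := by
            rw [hcdef, ENNReal.ofReal_add zero_le_one (mul_nonneg hL2D0 hM0),
              ENNReal.ofReal_one]
end
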